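/- arXiv:1510.02493 — 15 statements merged into one kernel-verified Lean document; each statement's English description precedes it below -/
import Mathlib

section
/- Let F be an additively idempotent semifield. Then every proper congruence on the Laurent polynomial semiring F(x_1,...,x_n) has trivial kernel, i.e., the equivalence class of 0 under any proper congruence is {0}. -/
/-- Every proper congruence of the Laurent polynomial semiring
`F(x_1, …, x_n)` over an additively idempotent semifield `F` has trivial kernel. -/
theorem stmt_0 (F : Type*) [Semifield F] (hidem : ∀ a : F, a + a = a) (n : ℕ)
    (C : RingCon (AddMonoidAlgebra F (Fin n →₀ ℤ)))
    (hproper : ∃ p q : AddMonoidAlgebra F (Fin n →₀ ℤ), ¬ C p q) :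
    ∀ p : AddMonoidAlgebra F (Fin n →₀ ℤ), C p 0 → p = 0 := by
  intro p hp
  by_contra hne
  obtain ⟨q, r, hqr⟩ := hproper
  apply hqr
  obtain ⟨a, ha⟩ : ∃ a, p.coeff a ≠ 0 := by
    by_contra h
    push_neg at h
    exact hne (AddMonoidAlgebra.ext (Finsupp.ext fun a => h a))
  set m : AddMonoidAlgebra F (Fin n →₀ ℤ) := AddMonoidAlgebra.single a (p.coeff a) with hm
  have hpm : p + m = p := by
    ext b
    by_cases hb : b = a
    · subst hb
      show p.coeff b + (Finsupp.single b (p.coeff b)) b = p.coeff b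
      rw [Finsupp.single_eq_same, hidem]
    · show p.coeff b + (Finsupp.single a (p.coeff a)) b = p.coeff b
      rw [Finsupp.single_eq_of_ne' (Ne.symm hb), add_zero]
  have h1 : C m 0 := by
    have h2 := C.add hp (C.refl m)
    rw [hpm, zero_add] at h2
    exact C.trans (C.symm h2) hp
  have hunit : m * AddMonoidAlgebra.single (-a) (p.coeff a)⁻¹ = 1 := by
    rw [hm, AddMonoidAlgebra.single_mul_single]
    simp [mul_inv_cancel₀ ha, AddMonoidAlgebra.one_def]
  have h10 : C 1 0 := by
    have h3 := C.mul h1 (C.refl (AddMonoidAlgebra.single (-a) (p.coeff a)⁻¹))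
    rwa [hunit, zero_mul] at h3
  have hall : ∀ s : AddMonoidAlgebra F (Fin n →₀ ℤ), C s 0 := fun s => by
    have h4 := C.mul (C.refl s) h10
    rwa [mul_one, mul_zero] at h4
  exact C.trans (hall q) (C.symm (hall r))
end

section
/- An additively idempotent commutative semiring A is a domain (its trivial congruence is prime) if and only if A is cancellative and totally ordered by the relation a ≤ b iff a + b = b. -/
/-- A prime congruence: proper, and twisted products in P force a factor in P. -/
def IsPrimeCon {A : Type*} [CommSemiring A] (P : RingCon A) : Prop :=
  (∃ a b : A, ¬ P a b) ∧
    ∀ a₁ a₂ b₁ b₂ : A,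
      P (a₁ * b₁ + a₂ * b₂) (a₁ * b₂ + a₂ * b₁) → P a₁ a₂ ∨ P b₁ b₂

/-- The trivial (diagonal) congruence. -/
def diagCon (A : Type*) [CommSemiring A] : RingCon A where
  r a b := a = b
  iseqv := ⟨fun _ => rfl, Eq.symm, Eq.trans⟩
  add' := by rintro a b c d rfl rfl; rfl
  mul' := by rintro a b c d rfl rfl; rfl

lemma diag_iff {A : Type*} [CommSemiring A] (a b : A) : diagCon A a b ↔ a = b := Iff.rfl

lemma helper {A : Type*} [CommSemiring A] (hidem : ∀ a : A, a + a = a)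
    (hcanc : ∀ a b c : A, a * b = a * c → a = 0 ∨ b = c)
    (htot : ∀ a b : A, a + b = a ∨ a + b = b)
    (a₁ a₂ b₁ b₂ : A) (ha : a₂ + a₁ = a₁) (hb : b₂ + b₁ = b₁)
    (heq : a₁ * b₁ + a₂ * b₂ = a₁ * b₂ + a₂ * b₁) : a₁ = a₂ ∨ b₁ = b₂ := by
  have hmax : a₁ * b₁ + a₂ * b₂ = a₁ * b₁ := by
    have h1 : a₂ * b₂ + a₁ * b₂ = a₁ * b₂ := by rw [← add_mul, ha]
    have h2 : a₁ * b₂ + a₁ * b₁ = a₁ * b₁ := by rw [← mul_add, hb]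
    calc a₁ * b₁ + a₂ * b₂ = a₂ * b₂ + (a₁ * b₂ + a₁ * b₁) := by rw [h2, add_comm]
      _ = (a₂ * b₂ + a₁ * b₂) + a₁ * b₁ := by ring
      _ = a₁ * b₂ + a₁ * b₁ := by rw [h1]
      _ = a₁ * b₁ := h2
  rw [hmax] at heq
  rcases htot (a₁ * b₂) (a₂ * b₁) with h | h
  · rw [h] at heq
    rcases hcanc a₁ b₁ b₂ heq with h0 | h0
    · left
      rw [h0] at ha
      rw [h0, ← ha, add_zero]
    · right; exact h0
  · rw [h] at heq
    rw [mul_comm a₁ b₁, mul_comm a₂ b₁] at heq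
    rcases hcanc b₁ a₁ a₂ heq with h0 | h0
    · right
      rw [h0] at hb
      rw [h0, ← hb, add_zero]
    · left; exact h0

/-- An additively idempotent commutative semiring is a domain (its diagonal
congruence is prime) iff it is cancellative and totally ordered by
`a ≤ b ↔ a + b = b`. -/
theorem stmt_3 (A : Type*) [CommSemiring A] [Nontrivial A]
    (hidem : ∀ a : A, a + a = a) :
    IsPrimeCon (diagCon A) ↔
      ((∀ a b c : A, a * b = a * c → a = 0 ∨ b = c) ∧
        ∀ a b : A, a + b = a ∨ a + b = b) := by
  have htwo : ∀ x : A, x + x = x := hidem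
  constructor
  · rintro ⟨-, hP⟩
    constructor
    · intro a b c h
      have := hP a 0 b c (by simp only [diag_iff]; simp [h])
      exact this
    · intro a b
      have key : (a+b) * (a+b) + a * b = (a+b) * b + a * (a+b) := by
        have : (a+b) * (a+b) + a * b = a*a + a*b + b*b := by
          rw [add_mul, mul_add, mul_add]
          calc a * a + a * b + (b * a + b * b) + a * b
              = a*a + (a*b + a*b + a*b) + b*b := by ring
            _ = a*a + a*b + b*b := by rw [htwo, htwo]
        rw [this]
        rw [add_mul, mul_add]
        calc a*a + a*b + b*b = a*a + (a*b + a*b) + b*b := by rw [htwo]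
          _ = a * b + b * b + (a * a + a * b) := by ring
      have := hP (a+b) a (a+b) b key
      exact this
  · rintro ⟨hcanc, htot⟩
    constructor
    · obtain ⟨x, y, hxy⟩ := exists_pair_ne A
      exact ⟨x, y, hxy⟩
    · intro a₁ a₂ b₁ b₂ heq
      simp only [diag_iff] at heq ⊢
      rcases htot a₁ a₂ with ha | ha <;> rcases htot b₁ b₂ with hb | hb
      · rw [add_comm] at ha hb
        exact helper hidem hcanc htot a₁ a₂ b₁ b₂ ha hb heq
      · rw [add_comm] at ha
        rcases helper hidem hcanc htot a₁ a₂ b₂ b₁ ha hb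
          (by simpa [add_comm] using heq.symm) with h | h
        · exact Or.inl h
        · exact Or.inr h.symm
      · rw [add_comm] at hb
        rcases helper hidem hcanc htot a₂ a₁ b₁ b₂ ha hb
          (by simpa [add_comm] using heq.symm) with h | h
        · exact Or.inl h.symm
        · exact Or.inr h
      · rcases helper hidem hcanc htot a₂ a₁ b₂ b₁ ha hb
          (by simpa [add_comm] using heq) with h | h
        · exact Or.inl h.symm
        · exact Or.inr h.symm
end

section
/- Every additively idempotent commutative semiring admits a surjective semiring homomorphism onto the two-element Boolean semifield B = {0,1} with 1 + 1 = 1. -/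
/-- Every additively idempotent commutative semiring maps surjectively onto the
two-element Boolean semifield `B = {0, 1}` with `1 + 1 = 1` (realized on `Bool`
with `‖` as addition and `&&` as multiplication). -/
theorem stmt_4 (A : Type*) [CommSemiring A] [Nontrivial A]
    (hidem : ∀ a : A, a + a = a) :
    ∃ f : A → Bool, Function.Surjective f ∧ f 0 = false ∧ f 1 = true ∧
      (∀ a b : A, f (a + b) = (f a || f b)) ∧
      (∀ a b : A, f (a * b) = (f a && f b)) := by
  classical
  -- "Ideal" predicate: downward-closed ideals not containing 1
  set Id : Set A → Prop := fun I =>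
    (0:A) ∈ I ∧ (∀ a b : A, a ∈ I → b ∈ I → a + b ∈ I) ∧
    (∀ a b : A, a ∈ I → a * b ∈ I) ∧
    (∀ a b : A, a + b = b → b ∈ I → a ∈ I) ∧ (1:A) ∉ I with hIdDef
  have h0 : Id {0} := by
    refine ⟨rfl, ?_, ?_, ?_, ?_⟩
    · rintro a b (rfl : a = 0) (rfl : b = 0); simp
    · rintro a b (rfl : a = 0); simp
    · rintro a b hab (rfl : b = 0)
      have : a = 0 := by simpa using hab
      simpa using this
    · intro h
      have : (1:A) = 0 := by simpa using h
      exact one_ne_zero this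
  obtain ⟨P, -, hPmem, hPmax⟩ :
      ∃ P, {(0:A)} ⊆ P ∧ Maximal (· ∈ {I | Id I}) P := by
    apply zorn_subset_nonempty
    · intro c hc hchain hcne
      refine ⟨⋃₀ c, ?_, fun s hs => Set.subset_sUnion_of_mem hs⟩
      obtain ⟨I0, hI0⟩ := hcne
      refine ⟨⟨I0, hI0, (hc hI0).1⟩, ?_, ?_, ?_, ?_⟩
      · rintro a b ⟨I, hI, haI⟩ ⟨J, hJ, hbJ⟩
        rcases hchain.total hI hJ with h | h
        · exact ⟨J, hJ, (hc hJ).2.1 a b (h haI) hbJ⟩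
        · exact ⟨I, hI, (hc hI).2.1 a b haI (h hbJ)⟩
      · rintro a b ⟨I, hI, haI⟩
        exact ⟨I, hI, (hc hI).2.2.1 a b haI⟩
      · rintro a b hab ⟨I, hI, hbI⟩
        exact ⟨I, hI, (hc hI).2.2.2.1 a b hab hbI⟩
      · rintro ⟨I, hI, h1I⟩
        exact (hc hI).2.2.2.2 h1I
    · exact h0
  obtain ⟨hP0, hPadd, hPmul, hPdown, hP1⟩ := hPmem
  -- key: a + b ∈ P ↔ a ∈ P ∧ b ∈ P
  have memAdd : ∀ a b : A, a + b ∈ P ↔ (a ∈ P ∧ b ∈ P) := by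
    intro a b
    constructor
    · intro h
      constructor
      · exact hPdown a (a + b) (by rw [← add_assoc, hidem]) h
      · exact hPdown b (a + b) (by rw [add_comm a b, ← add_assoc, hidem]) h
    · rintro ⟨ha, hb⟩; exact hPadd a b ha hb
  -- P is prime
  have prime : ∀ a b : A, a * b ∈ P → a ∈ P ∨ b ∈ P := by
    intro a b hab
    by_contra hcon
    push_neg at hcon
    obtain ⟨ha, hb⟩ := hcon
    -- for x ∉ P with generic x : the ideal generated by P and x contains 1
    have key : ∀ x : A, x ∉ P → ∃ p ∈ P, ∃ r : A, 1 + (p + r * x) = p + r * x := by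
      intro x hx
      set J : Set A := {y | ∃ p ∈ P, ∃ r : A, y + (p + r * x) = p + r * x} with hJdef
      have hPJ : P ⊆ J := by
        intro p hp
        exact ⟨p, hp, 0, by rw [zero_mul, add_zero, hidem]⟩
      have hxJ : x ∈ J := ⟨0, hP0, 1, by rw [zero_add, one_mul, hidem]⟩
      by_contra h1
      push_neg at h1
      have hJid : Id J := by
        refine ⟨hPJ hP0, ?_, ?_, ?_, ?_⟩
        · rintro y z ⟨p, hp, r, hy⟩ ⟨q, hq, s, hz⟩
          refine ⟨p + q, hPadd p q hp hq, r + s, ?_⟩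
          have e1 : y + z + (p + q + (r + s) * x)
              = (y + (p + r * x)) + (z + (q + s * x)) := by ring
          rw [e1, hy, hz]; ring
        · rintro y z ⟨p, hp, r, hy⟩
          refine ⟨p * z, hPmul p z hp, r * z, ?_⟩
          have e1 : y * z + (p * z + r * z * x) = (y + (p + r * x)) * z := by ring
          rw [e1, hy]; ring
        · rintro y z hyz ⟨p, hp, r, hz⟩
          refine ⟨p, hp, r, ?_⟩
          calc y + (p + r * x) = y + (z + (p + r * x)) := by rw [hz]
            _ = (y + z) + (p + r * x) := by ring
            _ = z + (p + r * x) := by rw [hyz]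
            _ = p + r * x := hz
        · intro h
          obtain ⟨p, hp, r, h⟩ := h
          exact h1 p hp r h
      have : J ⊆ P := hPmax hJid hPJ
      exact hx (this hxJ)
    obtain ⟨p, hp, r, hpa⟩ := key a ha
    obtain ⟨q, hq, s, hqb⟩ := key b hb
    set u := p + r * a with hu
    set v := q + s * b with hv
    have huv : u * v = 1 + u + v + u * v := by
      calc u * v = (1 + u) * (1 + v) := by rw [hpa, hqb]
        _ = 1 + u + v + u * v := by ring
    have h1uv : 1 + u * v = u * v := by
      have e : (1:A) + (1 + u + v + u * v) = 1 + u + v + u * v := by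
        have e2 : (1:A) + (1 + u + v + u * v) = (1 + 1) + u + v + u * v := by ring
        rw [e2, hidem]
      calc 1 + u * v = 1 + (1 + u + v + u * v) := by rw [← huv]
        _ = 1 + u + v + u * v := e
        _ = u * v := huv.symm
    have huvP : u * v ∈ P := by
      have e : u * v = p * q + p * (s * b) + (r * a) * q + (r * s) * (a * b) := by
        rw [hu, hv]; ring
      rw [e]
      refine hPadd _ _ (hPadd _ _ (hPadd _ _ ?_ ?_) ?_) ?_
      · exact hPmul p q hp
      · exact hPmul p _ hp
      · rw [mul_comm]; exact hPmul q _ hq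
      · rw [mul_comm]; exact hPmul (a * b) _ hab
    exact hP1 (hPdown 1 (u * v) h1uv huvP)
  have memMul : ∀ a b : A, a * b ∈ P ↔ (a ∈ P ∨ b ∈ P) := by
    intro a b
    constructor
    · exact prime a b
    · rintro (h | h)
      · exact hPmul a b h
      · rw [mul_comm]; exact hPmul b a h
  refine ⟨fun a => if a ∈ P then false else true, ?_, ?_, ?_, ?_, ?_⟩
  · intro b
    cases b
    · exact ⟨0, by simp [hP0]⟩
    · exact ⟨1, by simp [hP1]⟩
  · simp [hP0]
  · simp [hP1]
  · intro a b
    by_cases ha : a ∈ P <;> by_cases hb : b ∈ P <;>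
      simp [ha, hb, memAdd a b]
  · intro a b
    by_cases ha : a ∈ P <;> by_cases hb : b ∈ P <;>
      simp [ha, hb, memMul a b]
end

section
/- The only additively idempotent commutative semiring that is a domain and has Krull dimension 0 is the two-element Boolean semifield B. -/
/-- `HasKrullDim A d` : the longest chain of prime congruences of `A` has `d` strict
inclusions. -/
def HasKrullDim (A : Type*) [CommSemiring A] (d : ℕ) : Prop :=
  (∃ c : Fin (d + 1) → RingCon A, StrictMono c ∧ ∀ i, IsPrimeCon (c i)) ∧
    ∀ (m : ℕ) (c : Fin (m + 1) → RingCon A),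
      StrictMono c → (∀ i, IsPrimeCon (c i)) → m ≤ d

/-- The only additively idempotent commutative semiring that is a domain of Krull
dimension 0 is the two-element Boolean semifield `B = {0, 1}`. -/
theorem stmt_5 (A : Type*) [CommSemiring A] (hidem : ∀ a : A, a + a = a)
    (hdom : IsPrimeCon (diagCon A)) (h0 : HasKrullDim A 0) :
    (0 : A) ≠ 1 ∧ ∀ a : A, a = 0 ∨ a = 1 := by
  have hdiag : ∀ a b : A, diagCon A a b ↔ a = b := fun a b => Iff.rfl
  -- 0 ≠ 1
  have h01 : (0 : A) ≠ 1 := by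
    intro h
    obtain ⟨a, b, hab⟩ := hdom.1
    apply hab
    show a = b
    calc a = a * 1 := (mul_one a).symm
    _ = a * 0 := by rw [← h]
    _ = b * 0 := by rw [mul_zero, mul_zero]
    _ = b * 1 := by rw [h]
    _ = b := mul_one b
  -- no zero divisors
  have hmul0 : ∀ a b : A, a * b = 0 ↔ a = 0 ∨ b = 0 := by
    intro a b
    constructor
    · intro h
      have := hdom.2 a 0 b 0 (by show a * b + 0 * 0 = a * 0 + 0 * b; simp [h])
      exact this
    · rintro (rfl | rfl) <;> simp
  -- a + b = 0 → a = 0 ∧ b = 0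
  have hadd0 : ∀ a b : A, a + b = 0 ↔ a = 0 ∧ b = 0 := by
    intro a b
    constructor
    · intro h
      constructor
      · calc a = a + 0 := (add_zero a).symm
        _ = a + (a + b) := by rw [h]
        _ = (a + a) + b := (add_assoc a a b).symm
        _ = a + b := by rw [hidem]
        _ = 0 := h
      · calc b = 0 + b := (zero_add b).symm
        _ = (a + b) + b := by rw [h]
        _ = a + (b + b) := add_assoc a b b
        _ = a + b := by rw [hidem]
        _ = 0 := h
    · rintro ⟨rfl, rfl⟩; exact add_zero 0
  -- the support congruence
  let Q : RingCon A :=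
    { r := fun a b => (a = 0 ↔ b = 0)
      iseqv := ⟨fun _ => Iff.rfl, Iff.symm, Iff.trans⟩
      add' := by
        intro a b c d h1 h2
        have h1' : a = 0 ↔ b = 0 := h1
        have h2' : c = 0 ↔ d = 0 := h2
        show a + c = 0 ↔ b + d = 0
        rw [hadd0, hadd0, h1', h2']
      mul' := by
        intro a b c d h1 h2
        have h1' : a = 0 ↔ b = 0 := h1
        have h2' : c = 0 ↔ d = 0 := h2
        show a * c = 0 ↔ b * d = 0
        rw [hmul0, hmul0, h1', h2'] }
  have hQ : ∀ a b : A, Q a b ↔ (a = 0 ↔ b = 0) := fun a b => Iff.rfl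
  have hQprime : IsPrimeCon Q := by
    constructor
    · exact ⟨0, 1, by rw [hQ]; simp [h01.symm]⟩
    · intro a₁ a₂ b₁ b₂ h
      rw [hQ] at h
      rw [hQ, hQ]
      rw [hadd0, hadd0, hmul0, hmul0, hmul0, hmul0] at h
      tauto
  refine ⟨h01, ?_⟩
  intro a
  by_contra hcon
  push_neg at hcon
  obtain ⟨ha0, ha1⟩ := hcon
  have hlt : diagCon A < Q := by
    rw [lt_iff_le_and_ne]
    constructor
    · rw [RingCon.le_def]
      intro x y hxy
      rw [hdiag] at hxy
      rw [hQ, hxy]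
    · intro h
      have : Q a 1 := by rw [hQ]; simp [ha0, h01.symm]
      rw [← h, hdiag] at this
      exact ha1 this
  let c : Fin 2 → RingCon A := ![diagCon A, Q]
  have hmono : StrictMono c := by
    intro i j hij
    fin_cases i <;> fin_cases j <;> simp_all [c]
  have := h0.2 1 c hmono (by
    intro i; fin_cases i
    · exact hdom
    · exact hQprime)
  omega
end

section
/- Let A be an additively idempotent commutative semiring and let (P_i) be a family of prime congruences of A, each with trivial kernel. Then the intersection ⋂ P_i is a quotient-cancellative congruence: whenever (xa, xb) ∈ ⋂ P_i with x ≠ 0, we have (a,b) ∈ ⋂ P_i. -/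
/-- The intersection of a family of prime congruences with trivial kernels is
quotient-cancellative. -/
theorem stmt_6 (A : Type*) [CommSemiring A] (hidem : ∀ a : A, a + a = a)
    {ι : Type*} (P : ι → RingCon A) (hprime : ∀ i, IsPrimeCon (P i))
    (hker : ∀ i, ∀ a : A, P i a 0 → a = 0)
    (x a b : A) (hx : x ≠ 0) (h : ∀ i, P i (x * a) (x * b)) :
    ∀ i, P i a b := by
  intro i
  have key := (hprime i).2 x 0 a b (by simpa using h i)
  rcases key with hx0 | hab
  · exact absurd (hker i x hx0) hx
  · exact hab
end

section
/- Let A be a cancellative additively idempotent commutative semiring and a,b,c,d ∈ A with a > b and c > d (where x > y means x + y = x and x ≠ y). Then ac > bd. -/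
/-- In a cancellative additively idempotent commutative semiring, `a > b` and
`c > d` (where `x > y` means `x + y = x` and `x ≠ y`) imply `ac > bd`. -/
theorem stmt_7 (A : Type*) [CommSemiring A] (hidem : ∀ a : A, a + a = a)
    (hcanc : ∀ a b c : A, a * b = a * c → a = 0 ∨ b = c)
    (a b c d : A) (hab : a + b = a) (hab' : a ≠ b)
    (hcd : c + d = c) (hcd' : c ≠ d) :
    a * c + b * d = a * c ∧ a * c ≠ b * d := by
  have key : a * c + b * d = a * c := by
    have : a * c = (a + b) * (c + d) := by rw [hab, hcd]
    rw [add_mul, mul_add, mul_add] at this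
    calc a * c + b * d = (a * c + a * d + (b * c + b * d)) + b * d := by rw [← this]
      _ = a * c + a * d + (b * c + (b * d + b * d)) := by ring
      _ = a * c + a * d + (b * c + b * d) := by rw [hidem]
      _ = a * c := this.symm
  refine ⟨key, fun heq => ?_⟩
  have ha0 : a ≠ 0 := by
    intro h; apply hab'; rw [h] at hab ⊢; rw [← hab, zero_add]
  have h1 : a * c = a * d := by
    have : a * c + a * d = b * d + a * d := by rw [← heq]
    rw [← mul_add, hcd, ← add_mul, add_comm b a, hab] at this
    rw [this]
  rcases hcanc a c d h1 with h | h
  · exact ha0 h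
  · exact hcd' h
end

section
/- Let A be an additively idempotent commutative semiring and P a prime congruence on A. If (x^n, y^n) ∈ P for some n > 0, then (x, y) ∈ P. -/
section Aux

variable {A : Type*} [CommSemiring A] (P : RingCon A)

/-- Transitivity of the relation `a ⊴ b ↔ P (a+b) b`. -/
lemma ple_trans {a b c : A} (h1 : P (a + b) b) (h2 : P (b + c) c) :
    P (a + c) c := by
  have s1 : P (a + c) (a + (b + c)) := P.add (P.refl a) (P.symm h2)
  have s2 : P (a + (b + c)) (b + c) := by
    have : P ((a + b) + c) (b + c) := P.add h1 (P.refl c)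
    simpa [add_assoc] using this
  exact P.trans (P.trans s1 s2) h2

lemma ple_mul {a b : A} (h : P (a + b) b) (c : A) :
    P (a * c + b * c) (b * c) := by
  have := P.mul h (P.refl c)
  simpa [add_mul] using this

lemma ple_mul' {a b c d : A} (ha : P (a + b) b) (hc : P (c + d) d) :
    P (a * c + b * d) (b * d) := by
  refine ple_trans P (ple_mul P ha c) ?_
  have := ple_mul P hc b
  simpa [mul_comm] using this

lemma ple_pow {a b : A} (h : P (a + b) b) : ∀ k : ℕ, P (a ^ (k + 1) + b ^ (k + 1)) (b ^ (k + 1)) := by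
  intro k
  induction k with
  | zero => simpa using h
  | succ m ih =>
      have := ple_mul' P ih h
      simpa [pow_succ] using this

/-- Squeeze: if `a ⊴ c ⊴ b` and `a ≡ b`, then `c ≡ b`. -/
lemma ple_squeeze {a b c : A} (h1 : P (a + c) c) (h2 : P (c + b) b)
    (hab : P a b) : P c b := by
  have s1 : P (a + c) (b + c) := P.add hab (P.refl c)
  have s2 : P c (b + c) := P.trans (P.symm h1) s1
  have s3 : P (b + c) b := by simpa [add_comm] using h2
  exact P.trans s2 s3

lemma pow_zero_mem (hP : IsPrimeCon P) {a : A} :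
    ∀ k : ℕ, P (a ^ (k + 1)) 0 → P a 0 := by
  intro k
  induction k with
  | zero => intro h; simpa using h
  | succ m ih =>
      intro h
      rcases hP.2 a 0 (a ^ (m + 1)) 0 (by simpa [pow_succ, mul_comm] using h) with h' | h'
      · exact h'
      · exact ih h'

lemma aux_case (hidem : ∀ a : A, a + a = a) (hP : IsPrimeCon P) (x y : A) (m : ℕ)
    (h : P (x ^ (m + 2)) (y ^ (m + 2))) (hle : P (x + y) x) : P x y := by
  have hle' : P (y + x) x := by simpa [add_comm] using hle
  -- y^(m+2) ⊴ x^(m+1) * y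
  have hyy : P (y + y) y := by rw [hidem]; exact P.refl y
  have hxx : P (x ^ (m + 1) + x ^ (m + 1)) (x ^ (m + 1)) := by
    rw [hidem]; exact P.refl _
  have h1 : P (y ^ (m + 2) + x ^ (m + 1) * y) (x ^ (m + 1) * y) := by
    have := ple_mul' P (ple_pow P hle' m) hyy
    simpa [pow_succ] using this
  -- x^(m+1) * y ⊴ x^(m+2)
  have h2 : P (x ^ (m + 1) * y + x ^ (m + 2)) (x ^ (m + 2)) := by
    have := ple_mul' P hxx hle'
    simpa [pow_succ] using this
  have hsq : P (x ^ (m + 1) * y) (x ^ (m + 2)) :=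
    ple_squeeze P h1 h2 (P.symm h)
  -- twisted product of (x, y) and (x^(m+1), 0)
  rcases hP.2 x y (x ^ (m + 1)) 0
      (by simpa [pow_succ, mul_comm] using P.symm hsq) with h' | h'
  · exact h'
  · -- P (x^(m+1)) 0
    have hx0 : P x 0 := pow_zero_mem P hP m h'
    have hxn0 : P (x ^ (m + 2)) 0 := by
      have := P.mul h' (P.refl x)
      simpa [pow_succ] using this
    have hyn0 : P (y ^ (m + 2)) 0 := P.trans (P.symm h) hxn0
    have hy0 : P y 0 := pow_zero_mem P hP (m + 1) hyn0
    exact P.trans hx0 (P.symm hy0)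

end Aux

/-- If `(x^n, y^n)` lies in a prime congruence `P` of an additively idempotent
commutative semiring for some `n > 0`, then `(x, y) ∈ P`. -/
theorem stmt_8 (A : Type*) [CommSemiring A] (hidem : ∀ a : A, a + a = a)
    (P : RingCon A) (hP : IsPrimeCon P) (x y : A) (n : ℕ) (hn : 0 < n)
    (h : P (x ^ n) (y ^ n)) : P x y := by
  match n, hn with
  | 1, _ => simpa using h
  | (m + 2), _ =>
    -- total order: P (x+y) x or P (x+y) y
    have e : (x + y) * (x + y) + x * y = (x + y) * y + x * (x + y) := by
      have h3 : x * y + x * y + x * y = x * y := by rw [hidem, hidem]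
      calc (x + y) * (x + y) + x * y
          = x * x + (x * y + x * y + x * y) + y * y := by ring
        _ = x * x + x * y + y * y := by rw [h3]
        _ = x * x + (x * y + x * y) + y * y := by rw [hidem]
        _ = (x + y) * y + x * (x + y) := by ring
    rcases hP.2 (x + y) x (x + y) y (e ▸ P.refl _) with hle | hle
    · exact aux_case P hidem hP x y m h hle
    · have hle' : P (y + x) y := by simpa [add_comm] using hle
      exact P.symm (aux_case P hidem hP y x m (P.symm h) hle')
end

section
/- Let A be an additively idempotent commutative semiring and let P_1 ⊊ P_2 ⊆ P_3 ⊊ P_4 be prime congruences of the Laurent polynomial semiring A(x) in one variable, all with the same kernel. Then P_1 restricted to A is strictly contained in P_2 restricted to A, or P_3 restricted to A is strictly contained in P_4 restricted to A. -/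
section Aux
variable {R : Type*} [CommSemiring R] (P : RingCon R)

lemma pcon_pow {a b : R} (h : P a b) : ∀ n : ℕ, P (a ^ n) (b ^ n) := by
  intro n
  induction n with
  | zero => simpa using P.refl 1
  | succ n ih => rw [pow_succ, pow_succ]; exact P.mul ih h

lemma pcon_not_one_zero (hp : IsPrimeCon P) : ¬ P 1 0 := by
  intro h
  obtain ⟨a, b, hab⟩ := hp.1
  have ha : P a 0 := by simpa using P.mul (P.refl a) h
  have hb : P b 0 := by simpa using P.mul (P.refl b) h
  exact hab (P.trans ha (P.symm hb))

lemma pcon_cancel (hp : IsPrimeCon P) {a b c : R} (h : P (a * c) (b * c))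
    (hc : ¬ P c 0) : P a b := by
  rcases hp.2 a b c 0 (by simpa using h) with h' | h'
  · exact h'
  · exact absurd h' hc

lemma pcon_pow_zero (hp : IsPrimeCon P) {a : R} :
    ∀ n : ℕ, n ≠ 0 → P (a ^ n) 0 → P a 0 := by
  intro n
  induction n with
  | zero => intro h; exact absurd rfl h
  | succ n ih =>
    intro _ h
    rcases hp.2 a 0 (a ^ n) 0 (by simpa [pow_succ, mul_comm] using h) with h' | h'
    · exact h'
    · rcases Nat.eq_zero_or_pos n with hn | hn
      · subst hn; exact absurd (by simpa using h') (pcon_not_one_zero P hp)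
      · exact ih hn.ne' h'

lemma pcon_total (hp : IsPrimeCon P) (hid : ∀ x : R, x + x = x) (p q : R) :
    P (p + q) p ∨ P (p + q) q := by
  have e1 : (p + q) * (p + q) + p * q = p * p + q * q + (p * q + (p * q + p * q)) := by ring
  have e2 : (p + q) * q + p * (p + q) = p * p + q * q + (p * q + p * q) := by ring
  simp only [hid] at e1 e2
  have := hp.2 (p + q) p (p + q) q (by rw [e1, e2]; exact P.refl _)
  tauto

lemma pcon_le_trans {a b c : R} (hid : ∀ x : R, x + x = x)
    (h1 : P (a + b) b) (h2 : P (b + c) c) : P (a + c) c := by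
  have e1 : P (a + c) (a + (b + c)) := P.add (P.refl a) (P.symm h2)
  have e2 : P (a + (b + c)) (b + c) := by
    have := P.add h1 (P.refl c)
    rw [add_assoc] at this
    exact this
  exact P.trans (P.trans e1 e2) h2

lemma pcon_le_mul {a b : R} (c : R) (h : P (a + b) b) : P (a * c + b * c) (b * c) := by
  have := P.mul h (P.refl c)
  rwa [add_mul] at this

lemma pcon_le_pow {p q : R} (hid : ∀ x : R, x + x = x) (h : P (p + q) q) :
    ∀ n : ℕ, P (p ^ n + q ^ n) (q ^ n) := by
  intro n
  induction n with
  | zero => simpa [hid 1] using P.refl 1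
  | succ n ih =>
    have h1' : P (p ^ (n + 1) + p * q ^ n) (p * q ^ n) := by
      have := pcon_le_mul P p ih
      rwa [mul_comm (p ^ n) p, mul_comm (q ^ n) p, ← pow_succ'] at this
    have h2' : P (p * q ^ n + q ^ (n + 1)) (q ^ (n + 1)) := by
      have := pcon_le_mul P (q ^ n) h
      rwa [mul_comm q (q ^ n), ← pow_succ] at this
    exact pcon_le_trans P hid h1' h2'

lemma pcon_root_aux (hp : IsPrimeCon P) (hid : ∀ x : R, x + x = x) :
    ∀ (m : ℕ) (p q : R), P (p ^ (m + 1)) (q ^ (m + 1)) → P (p + q) q → P p q := by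
  intro m
  induction m with
  | zero => intro p q h _; simpa using h
  | succ m ih =>
    intro p q h hle
    by_cases hp0 : P p 0
    · have hq0 : P (q ^ (m + 2)) 0 := by
        refine P.trans (P.symm h) ?_
        have : P (p * p ^ (m + 1)) (0 * p ^ (m + 1)) := P.mul hp0 (P.refl _)
        simpa [← pow_succ'] using this
      have := pcon_pow_zero P hp (m + 2) (by omega) hq0
      exact P.trans hp0 (P.symm this)
    · set x := p ^ (m + 2) with hx
      set y := p * q ^ (m + 1) with hy
      set z := q ^ (m + 2) with hz
      have h1 : P (x + y) y := by
        have := pcon_le_mul P p (pcon_le_pow P hid hle (m + 1))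
        rwa [mul_comm (p ^ (m + 1)) p, mul_comm (q ^ (m + 1)) p, ← pow_succ', ← hx, ← hy] at this
      have h2 : P (y + z) z := by
        have := pcon_le_mul P (q ^ (m + 1)) hle
        rw [mul_comm q (q ^ (m + 1)), ← pow_succ] at this
        exact this
      have c2 : P x (y + z) := P.trans h (P.symm h2)
      have c3 : P (y + x) (y + (y + z)) := P.add (P.refl y) c2
      have c4 : y + (y + z) = y + z := by rw [← add_assoc, hid y]
      have c5 : P (x + y) z := by
        rw [add_comm x y]
        exact P.trans (c4 ▸ c3) h2
      have hxy : P x y := P.trans (P.trans h (P.symm c5)) h1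
      have : P (p ^ (m + 1) * p) (q ^ (m + 1) * p) := by
        rw [mul_comm _ p, mul_comm _ p, ← pow_succ']
        exact hxy
      exact ih p q (pcon_cancel P hp this hp0) hle

lemma pcon_root (hp : IsPrimeCon P) (hid : ∀ x : R, x + x = x) {p q : R}
    (n : ℕ) (hn : n ≠ 0) (h : P (p ^ n) (q ^ n)) : P p q := by
  obtain ⟨m, rfl⟩ := Nat.exists_eq_succ_of_ne_zero hn
  rcases pcon_total P hp hid p q with hle | hle
  · rw [add_comm] at hle
    exact P.symm (pcon_root_aux P hp hid m q p (P.symm h) hle)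
  · exact pcon_root_aux P hp hid m p q h hle

end Aux
open AddMonoidAlgebra Finsupp

section Laurent
variable {A : Type*} [CommSemiring A]

local notation "L" => AddMonoidAlgebra A ℤ

lemma lidem (hidem : ∀ a : A, a + a = a) : ∀ p : L, p + p = p := fun p =>
  AddMonoidAlgebra.ext (Finsupp.ext fun n => by
    rw [AddMonoidAlgebra.coeff_add, Finsupp.add_apply]; exact hidem _)

lemma lshift (P : RingCon L) (n : ℤ) {p q : L}
    (h : P (AddMonoidAlgebra.single n 1 * p) (AddMonoidAlgebra.single n 1 * q)) : P p q := by
  have := P.mul (P.refl (AddMonoidAlgebra.single (-n) (1 : A))) h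
  rw [← mul_assoc, ← mul_assoc] at this
  rw [show (AddMonoidAlgebra.single (-n) (1:A) * AddMonoidAlgebra.single n 1 : L) = 1 by
    rw [AddMonoidAlgebra.single_mul_single, neg_add_cancel, one_mul, AddMonoidAlgebra.one_def]]
    at this
  rwa [one_mul, one_mul] at this

lemma lshift' (P : RingCon L) (n : ℤ) {p q : L} (h : P p q) :
    P (AddMonoidAlgebra.single n 1 * p) (AddMonoidAlgebra.single n 1 * q) :=
  P.mul (P.refl _) h

lemma exists_monomial (P : RingCon L) (hp : IsPrimeCon P) (hidem : ∀ a : A, a + a = a)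
    (f : L) : ∃ (n : ℤ) (a : A), P f (AddMonoidAlgebra.single n a) := by
  induction f using AddMonoidAlgebra.induction with
  | zero => exact ⟨0, 0, by rw [AddMonoidAlgebra.single_zero]; exact P.refl 0⟩
  | single_add n a g hn ha ih =>
    obtain ⟨m, b, hg⟩ := ih
    have h1 := P.add (P.refl (AddMonoidAlgebra.single n a : AddMonoidAlgebra A ℤ)) hg
    rcases pcon_total P hp (lidem hidem) (AddMonoidAlgebra.single n a) (AddMonoidAlgebra.single m b) with h | h
    · exact ⟨n, a, P.trans h1 h⟩
    · exact ⟨m, b, P.trans h1 h⟩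

lemma pcon_normalize (P Q : RingCon L) (hP : IsPrimeCon P) (hidem : ∀ a : A, a + a = a)
    (hle : P ≤ Q) (f g : L) (hQ : Q f g) (hnP : ¬ P f g)
    (hk : ∀ p : L, P p 0 ↔ Q p 0)
    (hres : ∀ a b : A, Q (AddMonoidAlgebra.single 0 a) (AddMonoidAlgebra.single 0 b) →
      P (AddMonoidAlgebra.single 0 a) (AddMonoidAlgebra.single 0 b)) :
    ∃ (s : ℤ) (a b : A), 0 < s ∧ Q (AddMonoidAlgebra.single s a) (AddMonoidAlgebra.single 0 b) ∧
      ¬ P (AddMonoidAlgebra.single s a) (AddMonoidAlgebra.single 0 b) ∧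
      ¬ Q (AddMonoidAlgebra.single 0 a) 0 ∧ ¬ Q (AddMonoidAlgebra.single 0 b) 0 := by
  obtain ⟨n, a, hf⟩ := exists_monomial P hP hidem f
  obtain ⟨m, b, hg⟩ := exists_monomial P hP hidem g
  have hQ1 : Q (AddMonoidAlgebra.single n a) (AddMonoidAlgebra.single m b) :=
    Q.trans (Q.symm (hle hf)) (Q.trans hQ (hle hg))
  have hnP1 : ¬ P (AddMonoidAlgebra.single n a) (AddMonoidAlgebra.single m b) := fun h =>
    hnP (P.trans hf (P.trans h (P.symm hg)))
  -- multiply by single (-m) 1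
  have key : ∀ (u v : ℤ) (c d : A), Q (AddMonoidAlgebra.single u c) (AddMonoidAlgebra.single v d) →
      ¬ P (AddMonoidAlgebra.single u c) (AddMonoidAlgebra.single v d) → u ≠ v →
      ∃ (s : ℤ) (x y : A), 0 < s ∧ Q (AddMonoidAlgebra.single s x) (AddMonoidAlgebra.single 0 y) ∧
        ¬ P (AddMonoidAlgebra.single s x) (AddMonoidAlgebra.single 0 y) := by
    intro u v c d hq hnp huv
    rcases lt_or_gt_of_ne huv with h | h
    · -- u < v : single u c ~ single v d; multiply by single (-u) 1
      refine ⟨v - u, d, c, by omega, ?_, ?_⟩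
      · have := lshift' Q (-u) (Q.symm hq)
        rw [AddMonoidAlgebra.single_mul_single, AddMonoidAlgebra.single_mul_single, one_mul,
          one_mul, neg_add_cancel, neg_add_eq_sub] at this
        exact this
      · intro hcon
        apply hnp
        have := lshift' P u hcon
        rw [AddMonoidAlgebra.single_mul_single, AddMonoidAlgebra.single_mul_single] at this
        simp only [add_sub_cancel, add_zero, one_mul] at this
        exact P.symm this
    · refine ⟨u - v, c, d, by omega, ?_, ?_⟩
      · have := lshift' Q (-v) hq
        rw [AddMonoidAlgebra.single_mul_single, AddMonoidAlgebra.single_mul_single, one_mul,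
          one_mul, neg_add_cancel, neg_add_eq_sub] at this
        exact this
      · intro hcon
        apply hnp
        have := lshift' P v hcon
        rw [AddMonoidAlgebra.single_mul_single, AddMonoidAlgebra.single_mul_single] at this
        simpa [add_sub_cancel, one_mul] using this
  have hne : n ≠ m := by
    rintro rfl
    apply hnP1
    have h0 : Q (AddMonoidAlgebra.single 0 a) (AddMonoidAlgebra.single 0 b) := by
      have := lshift' Q (-n) hQ1
      rw [AddMonoidAlgebra.single_mul_single, AddMonoidAlgebra.single_mul_single, one_mul,
        one_mul, neg_add_cancel] at this
      exact this
    have := lshift' P n (hres a b h0)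
    rw [AddMonoidAlgebra.single_mul_single, AddMonoidAlgebra.single_mul_single, one_mul,
      one_mul, add_zero] at this
    exact this
  obtain ⟨s, x, y, hs, hq, hnp⟩ := key n m a b hQ1 hnP1 hne
  refine ⟨s, x, y, hs, hq, hnp, ?_, ?_⟩
  · intro hx0
    have h1 : Q (AddMonoidAlgebra.single s x) 0 := by
      have := lshift' Q s hx0
      rw [AddMonoidAlgebra.single_mul_single, add_zero, one_mul, mul_zero] at this
      exact this
    have h2 : Q (AddMonoidAlgebra.single 0 y) 0 := Q.trans (Q.symm hq) h1
    exact hnp (P.trans ((hk _).2 h1) (P.symm ((hk _).2 h2)))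
  · intro hy0
    have h1 : Q (AddMonoidAlgebra.single s x) 0 := Q.trans hq hy0
    exact hnp (P.trans ((hk _).2 h1) (P.symm ((hk _).2 hy0)))

end Laurent

/-- For primes `P₁ ⊊ P₂ ⊆ P₃ ⊊ P₄` of the Laurent polynomial semiring `A(x)`
with equal kernels, at least one of the restrictions `P₁|_A ⊆ P₂|_A`,
`P₃|_A ⊆ P₄|_A` is strict. -/
theorem stmt_9 (A : Type*) [CommSemiring A] (hidem : ∀ a : A, a + a = a)
    (P₁ P₂ P₃ P₄ : RingCon (AddMonoidAlgebra A ℤ))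
    (hp₁ : IsPrimeCon P₁) (hp₂ : IsPrimeCon P₂)
    (hp₃ : IsPrimeCon P₃) (hp₄ : IsPrimeCon P₄)
    (h12 : P₁ < P₂) (h23 : P₂ ≤ P₃) (h34 : P₃ < P₄)
    (hker : ∀ p : AddMonoidAlgebra A ℤ,
      (P₁ p 0 ↔ P₂ p 0) ∧ (P₁ p 0 ↔ P₃ p 0) ∧ (P₁ p 0 ↔ P₄ p 0)) :
    (∃ a b : A, P₂ (AddMonoidAlgebra.singleZeroRingHom a)
        (AddMonoidAlgebra.singleZeroRingHom b) ∧
      ¬ P₁ (AddMonoidAlgebra.singleZeroRingHom a)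
        (AddMonoidAlgebra.singleZeroRingHom b)) ∨
    (∃ a b : A, P₄ (AddMonoidAlgebra.singleZeroRingHom a)
        (AddMonoidAlgebra.singleZeroRingHom b) ∧
      ¬ P₃ (AddMonoidAlgebra.singleZeroRingHom a)
        (AddMonoidAlgebra.singleZeroRingHom b)) := by
  by_contra hcon
  push_neg at hcon
  obtain ⟨h1, h2⟩ := hcon
  have hidem' := lidem (A := A) hidem
  -- extract a strict pair for P₁ < P₂
  have hpair12 : ∃ f g, P₂ f g ∧ ¬ P₁ f g := by
    by_contra hc
    push_neg at hc
    exact h12.not_ge fun x y h => hc x y h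
  have hpair34 : ∃ f g, P₄ f g ∧ ¬ P₃ f g := by
    by_contra hc
    push_neg at hc
    exact h34.not_ge fun x y h => hc x y h
  obtain ⟨f, g, hfg2, hfg1⟩ := hpair12
  obtain ⟨u, v, huv4, huv3⟩ := hpair34
  have hker12 : ∀ p : AddMonoidAlgebra A ℤ, P₁ p 0 ↔ P₂ p 0 := fun p => (hker p).1
  have hker34 : ∀ p : AddMonoidAlgebra A ℤ, P₃ p 0 ↔ P₄ p 0 := fun p =>
    ((hker p).2.1.symm).trans (hker p).2.2
  have hres12 : ∀ a b : A, P₂ (AddMonoidAlgebra.single 0 a) (AddMonoidAlgebra.single 0 b) →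
      P₁ (AddMonoidAlgebra.single 0 a) (AddMonoidAlgebra.single 0 b) := fun a b h => h1 a b h
  have hres34 : ∀ a b : A, P₄ (AddMonoidAlgebra.single 0 a) (AddMonoidAlgebra.single 0 b) →
      P₃ (AddMonoidAlgebra.single 0 a) (AddMonoidAlgebra.single 0 b) := fun a b h => h2 a b h
  obtain ⟨s, a, b, hs, hQab, -, hanz2, hbnz2⟩ :=
    pcon_normalize P₁ P₂ hp₁ hidem h12.le f g hfg2 hfg1 hker12 hres12
  obtain ⟨t, c, d, ht, hQcd, hnPcd, hcnz4, hdnz4⟩ :=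
    pcon_normalize P₃ P₄ hp₃ hidem h34.le u v huv4 huv3 hker34 hres34
  -- nonvanishing mod P₃
  have ha3 : ¬ P₃ (AddMonoidAlgebra.single 0 a) 0 := fun h =>
    hanz2 ((hker _).1.mp ((hker _).2.1.mpr h))
  have hd3 : ¬ P₃ (AddMonoidAlgebra.single 0 d) 0 := fun h => hdnz4 ((hker34 _).mp h)
  set k := t.toNat with hkdef
  set l := s.toNat with hldef
  have hk : (k : ℤ) = t := Int.toNat_of_nonneg ht.le
  have hl : (l : ℤ) = s := Int.toNat_of_nonneg hs.le
  have kne : k ≠ 0 := by omega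
  have lne : l ≠ 0 := by omega
  have e1 : P₃ (AddMonoidAlgebra.single (s * t) (a ^ k)) (AddMonoidAlgebra.single 0 (b ^ k)) := by
    have := pcon_pow P₂ hQab k
    rw [AddMonoidAlgebra.single_pow, AddMonoidAlgebra.single_pow, smul_zero,
      nsmul_eq_mul, hk, mul_comm t s] at this
    exact h23 this
  have e2 : P₄ (AddMonoidAlgebra.single (s * t) (c ^ l)) (AddMonoidAlgebra.single 0 (d ^ l)) := by
    have := pcon_pow P₄ hQcd l
    rw [AddMonoidAlgebra.single_pow, AddMonoidAlgebra.single_pow, smul_zero,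
      nsmul_eq_mul, hl] at this
    exact this
  have e3 : P₄ (AddMonoidAlgebra.single (s * t) (d ^ l * a ^ k))
      (AddMonoidAlgebra.single (s * t) (c ^ l * b ^ k)) := by
    have := P₄.mul (P₄.symm e2) (h34.le e1)
    rw [AddMonoidAlgebra.single_mul_single, AddMonoidAlgebra.single_mul_single,
      zero_add, add_zero] at this
    exact this
  have e4 : P₄ (AddMonoidAlgebra.single 0 (d ^ l * a ^ k))
      (AddMonoidAlgebra.single 0 (c ^ l * b ^ k)) := by
    apply lshift P₄ (s * t)
    rw [AddMonoidAlgebra.single_mul_single, AddMonoidAlgebra.single_mul_single,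
      add_zero, one_mul, one_mul]
    exact e3
  have e5 : P₃ (AddMonoidAlgebra.single 0 (d ^ l * a ^ k))
      (AddMonoidAlgebra.single 0 (c ^ l * b ^ k)) := hres34 _ _ e4
  have e6 : P₃ (AddMonoidAlgebra.single (s * t) (c ^ l * a ^ k))
      (AddMonoidAlgebra.single 0 (c ^ l * b ^ k)) := by
    have := P₃.mul (P₃.refl (AddMonoidAlgebra.single 0 (c ^ l) : AddMonoidAlgebra A ℤ)) e1
    rw [AddMonoidAlgebra.single_mul_single, AddMonoidAlgebra.single_mul_single,
      zero_add, zero_add] at this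
    exact this
  have e7 : P₃ (AddMonoidAlgebra.single (s * t) (c ^ l))
      (AddMonoidAlgebra.single 0 (d ^ l)) := by
    have e7' := P₃.trans e6 (P₃.symm e5)
    rw [show (AddMonoidAlgebra.single (s * t) (c ^ l * a ^ k) : AddMonoidAlgebra A ℤ) =
        AddMonoidAlgebra.single (s * t) (c ^ l) * AddMonoidAlgebra.single 0 (a ^ k) by
      rw [AddMonoidAlgebra.single_mul_single, add_zero],
      show (AddMonoidAlgebra.single 0 (d ^ l * a ^ k) : AddMonoidAlgebra A ℤ) =
        AddMonoidAlgebra.single 0 (d ^ l) * AddMonoidAlgebra.single 0 (a ^ k) by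
      rw [AddMonoidAlgebra.single_mul_single, add_zero]] at e7'
    refine pcon_cancel P₃ hp₃ e7' ?_
    intro h
    apply ha3
    refine pcon_pow_zero P₃ hp₃ k kne ?_
    rw [AddMonoidAlgebra.single_pow, smul_zero]
    exact h
  have e8 : P₃ (AddMonoidAlgebra.single t c) (AddMonoidAlgebra.single 0 d) := by
    refine pcon_root P₃ hp₃ hidem' l lne ?_
    rw [AddMonoidAlgebra.single_pow, AddMonoidAlgebra.single_pow, smul_zero,
      nsmul_eq_mul, hl]
    exact e7
  exact hnPcd e8
end

section
/- For any additively idempotent semifield F and any n ≥ 1, the Krull dimension of the Laurent polynomial semiring F(x_1,...,x_n) equals dim F + n. -/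
set_option maxHeartbeats 2000000

namespace KD

section Generic
variable {A : Type*} [CommSemiring A] {P : RingCon A}

theorem not01 (hP : IsPrimeCon P) : ¬ P 0 1 := by
  intro h01
  obtain ⟨a, b, hab⟩ := hP.1
  have ha : P 0 a := by simpa using P.mul h01 (P.refl a)
  have hb : P 0 b := by simpa using P.mul h01 (P.refl b)
  exact hab (P.trans (P.symm ha) hb)

theorem relPow {a b : A} (h : P a b) : ∀ k : ℕ, P (a ^ k) (b ^ k) := by
  intro k; induction k with
  | zero => simpa using P.refl 1
  | succ k ih => rw [pow_succ, pow_succ]; exact P.mul ih h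

theorem total (hidem : ∀ x : A, x + x = x) (hP : IsPrimeCon P) (a b : A) :
    P (a + b) a ∨ P (a + b) b := by
  refine hP.2 (a+b) a (a+b) b ?_
  have : (a+b) * (a+b) + a * b = (a+b) * b + a * (a+b) := by
    have h3 : a*b + (a*b + a*b) = a*b + a*b := by
      conv_lhs => rw [hidem (a*b)]
    calc (a+b) * (a+b) + a * b = (a*a + b*b) + (a*b + (a*b + a*b)) := by ring
    _ = (a*a + b*b) + (a*b + a*b) := by rw [h3]
    _ = (a+b) * b + a * (a+b) := by ring
  rw [this]; exact P.refl _

theorem cancel (hP : IsPrimeCon P) {a b t : A} (h : P (a * t) (b * t)) :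
    P a b ∨ P t 0 := by
  refine hP.2 a b t 0 ?_
  simpa using h

theorem pow_ne (hP : IsPrimeCon P) {a : A} (ha : ¬ P a 0) : ∀ k, ¬ P (a ^ k) 0 := by
  intro k
  induction k with
  | zero => simpa using fun h => not01 hP (P.symm h)
  | succ k ih =>
    intro h
    have : P (a^k * a) (0 * a) := by rw [zero_mul, ← pow_succ]; exact h
    rcases cancel hP this with h' | h' <;> [exact ih h'; exact ha h']

theorem relOfEq {a b a' b' : A} (h : P a b) (ea : a = a') (eb : b = b') : P a' b' := by
  subst ea; subst eb; exact h

theorem leP_trans {a b c : A} (h1 : P (a + b) b) (h2 : P (b + c) c) : P (a + c) c := by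
  -- a + c ~ a + (b + c) = (a+b) + c ~ b + c ~ c
  have s1 : P (a + c) (a + (b + c)) := P.add (P.refl a) (P.symm h2)
  have s2 : P (a + (b+c)) (b + c) := by
    have : a + (b + c) = (a + b) + c := by ring
    rw [this]
    exact P.add h1 (P.refl c)
  exact P.trans s1 (P.trans s2 h2)

theorem leP_mul {a b t : A} (h : P (a + b) b) : P (a * t + b * t) (b * t) := by
  have := P.mul h (P.refl t)
  rwa [add_mul] at this

/-- strict monotonicity consequence: `a <ᴾ b`, both behaviors -/
theorem pow_rel (hidem : ∀ x : A, x + x = x) (hP : IsPrimeCon P) {a b : A}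
    (ha : ¬ P a 0) (hb : ¬ P b 0) {m : ℕ} (hm : 0 < m) (h : P (a ^ m) (b ^ m)) :
    P a b := by
  by_contra hab
  -- wlog a < b  (i.e. P (a+b) b and ¬ P a b)
  have key : ∀ x y : A, ¬ P x 0 → ¬ P y 0 → ¬ P x y → P (x + y) y → ¬ P (x ^ m) (y ^ m) := by
    intro x y hx hy hxy hle
    -- show ∀ k ≥ 1, P (x^k + y^k) (y^k) ∧ ¬ P (x^k) (y^k), by induction
    have main : ∀ k : ℕ, P (x ^ (k+1) + y ^ (k+1)) (y ^ (k+1)) ∧ ¬ P (x ^ (k+1)) (y ^ (k+1)) := by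
      intro k
      induction k with
      | zero => simpa using ⟨hle, hxy⟩
      | succ k ih =>
        obtain ⟨ihle, ihne⟩ := ih
        -- x^(k+2) ≤ x * y^(k+1) ≤ y^(k+2), middle step strict on the right
        have h1 : P (x ^ (k+2) + x * y ^ (k+1)) (x * y ^ (k+1)) :=
          relOfEq (P.mul (P.refl x) ihle) (by ring) (by ring)
        have h2 : P (x * y ^ (k+1) + y ^ (k+2)) (y ^ (k+2)) :=
          relOfEq (P.mul hle (P.refl (y ^ (k+1)))) (by ring) (by ring)
        have hstrict2 : ¬ P (x * y ^ (k+1)) (y ^ (k+2)) := by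
          intro hc
          have : P (x * y^(k+1)) (y * y^(k+1)) := relOfEq hc rfl (by ring)
          rcases cancel hP this with h' | h'
          · exact hxy h'
          · exact pow_ne hP hy (k+1) h'
        refine ⟨leP_trans h1 h2, ?_⟩
        intro hc
        -- then x*y^(k+1) ≤ y^(k+2) ~ x^(k+2) ≤ x*y^(k+1) so all equal: contradiction
        have e1 : P (x ^ (k+2) + x * y ^ (k+1)) (x * y ^ (k+1)) := h1
        -- y^(k+2) ~ x^(k+2), and x^(k+2) + x*y^(k+1) ~ x*y^(k+1)
        -- so y^(k+2) + x*y^(k+1) ~ x*y^(k+1); combined with h2: y^(k+2) ~ x*y^(k+1)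
        have e2 : P (y ^ (k+2) + x * y ^ (k+1)) (x * y ^ (k+1)) :=
          P.trans (P.add (P.symm hc) (P.refl _)) e1
        have e3 : P (y ^ (k+2) + x * y ^ (k+1)) (y ^ (k+2)) :=
          relOfEq h2 (by ring) rfl
        exact hstrict2 (P.trans (P.symm e2) e3)
    obtain ⟨m', rfl⟩ : ∃ m', m = m' + 1 := ⟨m - 1, (Nat.succ_pred_eq_of_pos hm).symm⟩
    exact (main m').2
  rcases total hidem hP a b with hc | hc
  · -- b ≤ a, and ¬ P b a
    have hba : ¬ P b a := fun h' => hab (P.symm h')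
    have : P (b + a) a := by rwa [add_comm] at hc
    exact key b a hb ha hba this (P.symm h)
  · exact key a b ha hb hab hc h


theorem comap_prime {B : Type*} [CommSemiring B] (φ : A →+* B) {Q : RingCon B}
    (hQ : IsPrimeCon Q) : IsPrimeCon (Q.comap φ) := by
  constructor
  · refine ⟨0, 1, fun h => not01 hQ ?_⟩
    have h' : Q (φ 0) (φ 1) := h
    rwa [map_zero, map_one] at h' 
  · intro a₁ a₂ b₁ b₂ h
    have h' : Q (φ a₁ * φ b₁ + φ a₂ * φ b₂) (φ a₁ * φ b₂ + φ a₂ * φ b₁) := by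
      have h0 : Q (φ (a₁ * b₁ + a₂ * b₂)) (φ (a₁ * b₂ + a₂ * b₁)) := h
      simpa [map_add, map_mul] using h0
    exact hQ.2 _ _ _ _ h'

theorem comap_mono {B : Type*} [CommSemiring B] (φ : A →+* B) {Q Q' : RingCon B}
    (h : Q ≤ Q') : Q.comap φ ≤ Q'.comap φ := by
  rw [RingCon.le_def] at h ⊢
  intro a b hab
  exact h hab

theorem not_le_witness {R : Type*} [CommSemiring R] {P Q : RingCon R} (h : ¬ Q ≤ P) :
    ∃ a b, Q a b ∧ ¬ P a b := by
  by_contra hc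
  push_neg at hc
  exact h (RingCon.le_def.2 fun {x y} hxy => hc x y hxy)

end Generic

section LT
variable {F : Type*} [Semifield F] {Γ Γ' : Type*} [AddCommMonoid Γ] [LinearOrder Γ] [IsOrderedCancelAddMonoid Γ]
  [AddCommMonoid Γ'] [LinearOrder Γ'] [IsOrderedCancelAddMonoid Γ']
open AddMonoidAlgebra

/-- zero-sum-free -/
theorem zsf (hidem : ∀ x : F, x + x = x) {a b : F} (h : a + b = 0) : a = 0 ∧ b = 0 := by
  constructor
  · have : a + (a + b) = a + b := by rw [← add_assoc, hidem]
    rw [h, add_zero] at this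
    exact this
  · have : (a + b) + b = a + b := by rw [add_assoc, hidem]
    rw [h, zero_add] at this
    exact this

theorem sum_eq_zero_forall (hidem : ∀ x : F, x + x = x) {α : Type*} {s : Finset α}
    {h : α → F} : ∑ i ∈ s, h i = 0 → ∀ i ∈ s, h i = 0 := by
  classical
  induction s using Finset.induction with
  | empty => simp
  | @insert a s hnotmem ih =>
    intro hsum i hi
    rw [Finset.sum_insert hnotmem] at hsum
    obtain ⟨h1, h2⟩ := zsf hidem hsum
    rcases Finset.mem_insert.1 hi with rfl | hi'
    · exact h1
    · exact ih h2 i hi'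

theorem sum_ne_zero (hidem : ∀ x : F, x + x = x) {α : Type*} {s : Finset α} {h : α → F}
    {a₀ : α} (ha₀ : a₀ ∈ s) (hne : h a₀ ≠ 0) : ∑ i ∈ s, h i ≠ 0 :=
  fun hsum => hne (sum_eq_zero_forall hidem hsum a₀ ha₀)

noncomputable def deg (f : AddMonoidAlgebra F Γ) : Γ := WithBot.unbotD 0 (f.coeff.support.max)

noncomputable def lc (f : AddMonoidAlgebra F Γ) : F := f.coeff (deg f)

theorem deg_mem {f : AddMonoidAlgebra F Γ} (hf : f ≠ 0) : deg f ∈ f.coeff.support := by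
  have hne : f.coeff.support.Nonempty := Finsupp.support_nonempty_iff.2 (mt AddMonoidAlgebra.coeff_eq_zero.1 hf)
  have : f.coeff.support.max = (f.coeff.support.max' hne : Γ) := (Finset.coe_max' hne).symm
  rw [deg, this]
  exact (Finset.max'_mem _ hne)

theorem le_deg {f : AddMonoidAlgebra F Γ} {u : Γ} (hu : u ∈ f.coeff.support) : u ≤ deg f := by
  have hf : f ≠ 0 := by
    intro h; subst h; simp at hu
  have hne : f.coeff.support.Nonempty := Finsupp.support_nonempty_iff.2 (mt AddMonoidAlgebra.coeff_eq_zero.1 hf)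
  have : f.coeff.support.max = (f.coeff.support.max' hne : Γ) := (Finset.coe_max' hne).symm
  rw [deg, this]
  exact Finset.le_max' _ _ hu

theorem lc_ne {f : AddMonoidAlgebra F Γ} (hf : f ≠ 0) : lc f ≠ 0 :=
  Finsupp.mem_support_iff.1 (deg_mem hf)

theorem deg_char {f : AddMonoidAlgebra F Γ} {M : Γ} (hM : f.coeff M ≠ 0)
    (hub : ∀ u ∈ f.coeff.support, u ≤ M) : f ≠ 0 ∧ deg f = M ∧ lc f = f.coeff M := by
  have hf : f ≠ 0 := by
    intro h; subst h; simp at hM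
  have h1 : deg f ≤ M := hub _ (deg_mem hf)
  have h2 : M ≤ deg f := le_deg (Finsupp.mem_support_iff.2 hM)
  have h3 : deg f = M := le_antisymm h1 h2
  exact ⟨hf, h3, by rw [lc, h3]⟩

theorem single_facts {u : Γ} {c : F} (hc : c ≠ 0) :
    (single u c : AddMonoidAlgebra F Γ) ≠ 0 ∧ deg (single u c : AddMonoidAlgebra F Γ) = u ∧
      lc (single u c : AddMonoidAlgebra F Γ) = c := by
  have hM : (single u c : AddMonoidAlgebra F Γ).coeff u = c := by
    show (Finsupp.single u c) u = c
    simp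
  have := deg_char (M := u) (f := (single u c : AddMonoidAlgebra F Γ)) (by rw [hM]; exact hc) ?_
  · refine ⟨this.1, this.2.1, by rw [this.2.2, hM]⟩
  · intro v hv
    have : v ∈ (Finsupp.single u c).support := hv
    rw [Finsupp.support_single_ne_zero _ hc] at this
    simp at this
    exact le_of_eq this

theorem sum_facts (hidem : ∀ x : F, x + x = x) {f g : AddMonoidAlgebra F Γ}
    (hf : f ≠ 0) (hg : g ≠ 0) :
    f + g ≠ 0 ∧ deg (f + g) = max (deg f) (deg g) ∧
      lc (f + g) = (if deg g < deg f then lc f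
        else if deg f < deg g then lc g else lc f + lc g) := by
  classical
  set M := max (deg f) (deg g) with hM
  have hub : ∀ u ∈ (f + g).coeff.support, u ≤ M := by
    intro u hu
    rcases Finset.mem_union.1 (Finsupp.support_add hu) with h | h
    · exact le_trans (le_deg h) (le_max_left _ _)
    · exact le_trans (le_deg h) (le_max_right _ _)
  have happ : (f + g).coeff M = f.coeff M + g.coeff M := Finsupp.add_apply f.coeff g.coeff M
  have hout : ∀ (p : AddMonoidAlgebra F Γ), p ≠ 0 → deg p < M → p.coeff M = 0 := by
    intro p _ hlt
    by_contra hne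
    exact absurd (le_deg (Finsupp.mem_support_iff.2 hne)) (not_le.2 hlt)
  rcases lt_trichotomy (deg f) (deg g) with hc | hc | hc
  · have hMg : M = deg g := max_eq_right hc.le
    have hfM : f.coeff M = 0 := hout f hf (by rw [hMg]; exact hc)
    have hcoeff : (f + g).coeff M = lc g := by rw [happ, hfM, zero_add, hMg]; rfl
    have hne : (f + g).coeff M ≠ 0 := by rw [hcoeff]; exact lc_ne hg
    obtain ⟨h1, h2, h3⟩ := deg_char hne hub
    refine ⟨h1, h2, ?_⟩
    rw [if_neg (not_lt.2 hc.le), if_pos hc, h3, hcoeff]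
  · have hMf : M = deg f := max_eq_left hc.ge
    have hlcg : lc g = g.coeff (deg f) := by rw [lc, hc]
    have hcoeff : (f + g).coeff M = lc f + lc g := by
      rw [happ, hMf, hlcg]; rfl
    have hne : (f + g).coeff M ≠ 0 := by
      rw [hcoeff]
      intro h
      exact lc_ne hf (zsf hidem h).1
    obtain ⟨h1, h2, h3⟩ := deg_char hne hub
    refine ⟨h1, h2, ?_⟩
    rw [if_neg (by rw [hc]; exact lt_irrefl _), if_neg (by rw [hc]; exact lt_irrefl _), h3, hcoeff]
  · have hMf : M = deg f := max_eq_left hc.le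
    have hgM : g.coeff M = 0 := hout g hg (by rw [hMf]; exact hc)
    have hcoeff : (f + g).coeff M = lc f := by rw [happ, hgM, add_zero, hMf]; rfl
    have hne : (f + g).coeff M ≠ 0 := by rw [hcoeff]; exact lc_ne hf
    obtain ⟨h1, h2, h3⟩ := deg_char hne hub
    refine ⟨h1, h2, ?_⟩
    rw [if_pos hc, h3, hcoeff]

theorem mul_facts {f g : AddMonoidAlgebra F Γ} (hf : f ≠ 0) (hg : g ≠ 0) :
    f * g ≠ 0 ∧ deg (f * g) = deg f + deg g ∧ lc (f * g) = lc f * lc g := by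
  classical
  set M := deg f + deg g with hM
  have hcoeff : (f * g).coeff M = lc f * lc g := by
    rw [AddMonoidAlgebra.coeff_mul]
    rw [Finsupp.sum]
    rw [Finset.sum_eq_single (deg f)]
    · rw [Finsupp.sum]
      rw [Finset.sum_eq_single (deg g)]
      · rw [if_pos rfl]; rfl
      · intro b hb hbne
        rw [if_neg]
        intro h
        exact hbne (add_left_cancel h)
      · intro h
        rw [if_pos rfl]
        rw [Finsupp.notMem_support_iff.1 h, mul_zero]
    · intro a ha hane
      rw [Finsupp.sum]
      apply Finset.sum_eq_zero
      intro b hb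
      rw [if_neg]
      intro h
      have h1 : a < deg f := lt_of_le_of_ne (le_deg ha) hane
      have h2 : b ≤ deg g := le_deg hb
      have : a + b < M := add_lt_add_of_lt_of_le h1 h2
      rw [h] at this
      exact lt_irrefl _ this
    · intro h
      exact absurd (deg_mem hf) h
  have hub : ∀ u ∈ (f * g).coeff.support, u ≤ M := by
    intro u hu
    have := AddMonoidAlgebra.support_coeff_mul_subset f g hu
    rw [Finset.mem_add] at this
    obtain ⟨a, ha, b, hb, rfl⟩ := this
    exact add_le_add (le_deg ha) (le_deg hb)
  have hne : (f * g).coeff M ≠ 0 := by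
    rw [hcoeff]; exact mul_ne_zero (lc_ne hf) (lc_ne hg)
  obtain ⟨h1, h2, h3⟩ := deg_char hne hub
  exact ⟨h1, h2, by rw [h3, hcoeff]⟩


theorem q_ne_zero {q : RingCon F} (hq : IsPrimeCon q) {c : F} (hc : c ≠ 0) : ¬ q c 0 := by
  intro h
  have := q.mul h (q.refl c⁻¹)
  rw [mul_inv_cancel₀ hc, zero_mul] at this
  exact not01 hq (q.symm this)

/-- the leading-term relation -/
def LamRel (q : RingCon F) (f g : AddMonoidAlgebra F Γ) : Prop :=
  (f = 0 ∧ g = 0) ∨ (f ≠ 0 ∧ g ≠ 0 ∧ deg f = deg g ∧ q (lc f) (lc g))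

theorem lam_refl (q : RingCon F) (f : AddMonoidAlgebra F Γ) : LamRel q f f := by
  by_cases hf : f = 0
  · exact Or.inl ⟨hf, hf⟩
  · exact Or.inr ⟨hf, hf, rfl, q.refl _⟩

theorem lam_symm {q : RingCon F} {f g : AddMonoidAlgebra F Γ} (h : LamRel q f g) :
    LamRel q g f := by
  rcases h with ⟨h1, h2⟩ | ⟨h1, h2, h3, h4⟩
  · exact Or.inl ⟨h2, h1⟩
  · exact Or.inr ⟨h2, h1, h3.symm, q.symm h4⟩

theorem lam_trans {q : RingCon F} {f g h : AddMonoidAlgebra F Γ}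
    (h1 : LamRel q f g) (h2 : LamRel q g h) : LamRel q f h := by
  rcases h1 with ⟨a1, a2⟩ | ⟨a1, a2, a3, a4⟩
  · rcases h2 with ⟨b1, b2⟩ | ⟨b1, b2, b3, b4⟩
    · exact Or.inl ⟨a1, b2⟩
    · exact absurd a2 b1
  · rcases h2 with ⟨b1, b2⟩ | ⟨b1, b2, b3, b4⟩
    · exact absurd b1 a2
    · exact Or.inr ⟨a1, b2, a3.trans b3, q.trans a4 b4⟩

theorem lam_addRight (hidem : ∀ x : F, x + x = x) {q : RingCon F}
    {f g : AddMonoidAlgebra F Γ} (hfg : LamRel q f g) (h : AddMonoidAlgebra F Γ) :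
    LamRel q (f + h) (g + h) := by
  by_cases hh : h = 0
  · subst hh; rw [add_zero, add_zero]; exact hfg
  rcases hfg with ⟨a1, a2⟩ | ⟨a1, a2, a3, a4⟩
  · subst a1; subst a2; simpa using lam_refl q h
  obtain ⟨s1, s2, s3⟩ := sum_facts hidem a1 hh
  obtain ⟨t1, t2, t3⟩ := sum_facts hidem a2 hh
  refine Or.inr ⟨s1, t1, ?_, ?_⟩
  · rw [s2, t2, a3]
  · rw [s3, t3, a3]
    rcases lt_trichotomy (deg h) (deg g) with hc | hc | hc
    · rw [if_pos hc, if_pos hc]; exact a4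
    · rw [if_neg (by rw [hc]; exact lt_irrefl _), if_neg (by rw [hc]; exact lt_irrefl _),
        if_neg (by rw [hc]; exact lt_irrefl _), if_neg (by rw [hc]; exact lt_irrefl _)]
      exact q.add a4 (q.refl _)
    · rw [if_neg (not_lt.2 hc.le), if_pos hc, if_neg (not_lt.2 hc.le), if_pos hc]
      exact q.refl _

theorem lam_mulRight {q : RingCon F}
    {f g : AddMonoidAlgebra F Γ} (hfg : LamRel q f g) (h : AddMonoidAlgebra F Γ) :
    LamRel q (f * h) (g * h) := by
  by_cases hh : h = 0
  · subst hh; rw [mul_zero, mul_zero]; exact lam_refl q 0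
  rcases hfg with ⟨a1, a2⟩ | ⟨a1, a2, a3, a4⟩
  · subst a1; subst a2; simpa using lam_refl q (0 : AddMonoidAlgebra F Γ)
  obtain ⟨s1, s2, s3⟩ := mul_facts a1 hh
  obtain ⟨t1, t2, t3⟩ := mul_facts a2 hh
  exact Or.inr ⟨s1, t1, by rw [s2, t2, a3], by rw [s3, t3]; exact q.mul a4 (q.refl _)⟩

/-- The leading term prime congruence on `F[Γ]`. -/
def Lam (hidem : ∀ x : F, x + x = x) (q : RingCon F) : RingCon (AddMonoidAlgebra F Γ) where
  r := LamRel q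
  iseqv := ⟨lam_refl q, lam_symm, lam_trans⟩
  add' := fun {a b c d} h1 h2 => by
    have s1 : LamRel q (a + c) (b + c) := lam_addRight hidem h1 c
    have s2 : LamRel q (b + c) (b + d) := by
      have := lam_addRight hidem h2 b
      rwa [add_comm c b, add_comm d b] at this
    exact lam_trans s1 s2
  mul' := fun {a b c d} h1 h2 => by
    have s1 : LamRel q (a * c) (b * c) := lam_mulRight h1 c
    have s2 : LamRel q (b * c) (b * d) := by
      have := lam_mulRight h2 b
      rwa [mul_comm c b, mul_comm d b] at this
    exact lam_trans s1 s2

theorem lam_rel_iff (hidem : ∀ x : F, x + x = x) {q : RingCon F}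
    {f g : AddMonoidAlgebra F Γ} : (Lam hidem q) f g ↔ LamRel q f g := Iff.rfl

/-- strict comparison -/
def LtRel (q : RingCon F) (f g : AddMonoidAlgebra F Γ) : Prop :=
  (f = 0 ∧ g ≠ 0) ∨ (f ≠ 0 ∧ g ≠ 0 ∧
    (deg f < deg g ∨ (deg f = deg g ∧ (q (lc f + lc g) (lc g) ∧ ¬ q (lc f) (lc g)))))

theorem lt_ne_right {q : RingCon F} {f g : AddMonoidAlgebra F Γ} (h : LtRel q f g) : g ≠ 0 := by
  rcases h with ⟨_, h⟩ | ⟨_, h, _⟩ <;> exact h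

theorem lam_or_lt (hidem : ∀ x : F, x + x = x) {q : RingCon F} (hq : IsPrimeCon q)
    (f g : AddMonoidAlgebra F Γ) : LamRel q f g ∨ LtRel q f g ∨ LtRel q g f := by
  by_cases hf : f = 0
  · by_cases hg : g = 0
    · exact Or.inl (Or.inl ⟨hf, hg⟩)
    · exact Or.inr (Or.inl (Or.inl ⟨hf, hg⟩))
  by_cases hg : g = 0
  · exact Or.inr (Or.inr (Or.inl ⟨hg, hf⟩))
  rcases lt_trichotomy (deg f) (deg g) with hc | hc | hc
  · exact Or.inr (Or.inl (Or.inr ⟨hf, hg, Or.inl hc⟩))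
  · by_cases hqq : q (lc f) (lc g)
    · exact Or.inl (Or.inr ⟨hf, hg, hc, hqq⟩)
    · rcases total hidem hq (lc f) (lc g) with ht | ht
      · refine Or.inr (Or.inr (Or.inr ⟨hg, hf, Or.inr ⟨hc.symm, ?_, ?_⟩⟩))
        · rwa [add_comm]
        · exact fun h => hqq (q.symm h)
      · exact Or.inr (Or.inl (Or.inr ⟨hf, hg, Or.inr ⟨hc, ht, hqq⟩⟩))
  · exact Or.inr (Or.inr (Or.inr ⟨hg, hf, Or.inl hc⟩))

theorem lt_not_lam {q : RingCon F} {f g : AddMonoidAlgebra F Γ} (h : LtRel q f g) :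
    ¬ LamRel q f g := by
  rcases h with ⟨h1, h2⟩ | ⟨h1, h2, h3⟩
  · rintro (⟨_, c2⟩ | ⟨c1, _⟩)
    · exact h2 c2
    · exact c1 h1
  · rintro (⟨c1, _⟩ | ⟨_, _, c3, c4⟩)
    · exact h1 c1
    · rcases h3 with hd | ⟨_, _, hn⟩
      · rw [c3] at hd; exact lt_irrefl _ hd
      · exact hn c4

theorem lam_le_absorb (hidem : ∀ x : F, x + x = x) {q : RingCon F}
    {f g : AddMonoidAlgebra F Γ} (h : LamRel q f g ∨ LtRel q f g) :
    LamRel q (f + g) g := by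
  rcases h with (⟨h1, h2⟩ | ⟨h1, h2, h3, h4⟩) | (⟨h1, h2⟩ | ⟨h1, h2, h3⟩)
  · subst h1; subst h2; rw [add_zero]; exact lam_refl q 0
  · obtain ⟨s1, s2, s3⟩ := sum_facts hidem h1 h2
    refine Or.inr ⟨s1, h2, by rw [s2, h3, max_self], ?_⟩
    rw [s3, if_neg (by rw [h3]; exact lt_irrefl _), if_neg (by rw [h3]; exact lt_irrefl _)]
    have h5 := q.add h4 (q.refl (lc g))
    rw [hidem (lc g)] at h5
    exact h5
  · subst h1; rw [zero_add]; exact lam_refl q g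
  · obtain ⟨s1, s2, s3⟩ := sum_facts hidem h1 h2
    rcases h3 with hd | ⟨hd, hstrict, _⟩
    · refine Or.inr ⟨s1, h2, by rw [s2, max_eq_right hd.le], ?_⟩
      rw [s3, if_neg (not_lt.2 hd.le), if_pos hd]
      exact q.refl _
    · refine Or.inr ⟨s1, h2, by rw [s2, hd, max_self], ?_⟩
      rw [s3, if_neg (by rw [hd]; exact lt_irrefl _), if_neg (by rw [hd]; exact lt_irrefl _)]
      exact hstrict

theorem lt_mulRight {q : RingCon F} (hq : IsPrimeCon q)
    {f g h : AddMonoidAlgebra F Γ} (hfg : LtRel q f g) (hh : h ≠ 0) :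
    LtRel q (f * h) (g * h) := by
  rcases hfg with ⟨h1, h2⟩ | ⟨h1, h2, h3⟩
  · subst h1
    rw [zero_mul]
    exact Or.inl ⟨rfl, (mul_facts h2 hh).1⟩
  obtain ⟨s1, s2, s3⟩ := mul_facts h1 hh
  obtain ⟨t1, t2, t3⟩ := mul_facts h2 hh
  refine Or.inr ⟨s1, t1, ?_⟩
  rcases h3 with hd | ⟨hd, hle, hne⟩
  · exact Or.inl (by rw [s2, t2]; exact add_lt_add_left hd _)
  · refine Or.inr ⟨by rw [s2, t2, hd], ?_, ?_⟩
    · rw [s3, t3]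
      have := q.mul hle (q.refl (lc h))
      rwa [add_mul] at this
    · rw [s3, t3]
      intro hc
      rcases cancel hq hc with hc' | hc'
      · exact hne hc'
      · exact q_ne_zero hq (lc_ne hh) hc'

theorem lt_trans' {q : RingCon F} (hq : IsPrimeCon q)
    {f g h : AddMonoidAlgebra F Γ} (h1 : LtRel q f g) (h2 : LtRel q g h) :
    LtRel q f h := by
  have hh : h ≠ 0 := lt_ne_right h2
  rcases h1 with ⟨a1, a2⟩ | ⟨a1, a2, a3⟩
  · exact Or.inl ⟨a1, hh⟩
  rcases h2 with ⟨b1, b2⟩ | ⟨b1, b2, b3⟩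
  · exact absurd b1 a2
  refine Or.inr ⟨a1, hh, ?_⟩
  rcases a3 with ad | ⟨ad, ale, ane⟩
  · rcases b3 with bd | ⟨bd, _, _⟩
    · exact Or.inl (ad.trans bd)
    · exact Or.inl (bd ▸ ad)
  · rcases b3 with bd | ⟨bd, ble, bne⟩
    · exact Or.inl (ad ▸ bd)
    · refine Or.inr ⟨ad.trans bd, leP_trans ale ble, ?_⟩
      intro hac
      apply bne
      have h' := q.add (q.refl (lc g)) hac
      rw [add_comm (lc g) (lc f)] at h'
      exact q.trans (q.trans (q.symm ale) h') ble

theorem lt_add {q : RingCon F} (hq : IsPrimeCon q) (hidem : ∀ x : F, x + x = x)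
    {f g h : AddMonoidAlgebra F Γ} (h1 : LtRel q f h) (h2 : LtRel q g h) :
    LtRel q (f + g) h := by
  have hh : h ≠ 0 := lt_ne_right h1
  rcases h1 with ⟨a1, a2⟩ | ⟨a1, a2, a3⟩
  · subst a1; simpa using h2
  rcases h2 with ⟨b1, b2⟩ | ⟨b1, b2, b3⟩
  · subst b1; have hfh : LtRel q f h := Or.inr ⟨a1, a2, a3⟩; simpa using hfh
  obtain ⟨s1, s2, s3⟩ := sum_facts hidem a1 b1
  refine Or.inr ⟨s1, hh, ?_⟩
  rcases a3 with ad | ⟨ad, ale, ane⟩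
  · rcases b3 with bd | ⟨bd, ble, bne⟩
    · exact Or.inl (by rw [s2]; exact max_lt ad bd)
    · refine Or.inr ⟨by rw [s2, bd]; exact max_eq_right (bd ▸ ad.le), ?_, ?_⟩
      · have hdd : deg f < deg g := bd ▸ ad
        rw [s3, if_neg (not_lt.2 hdd.le), if_pos hdd]
        exact ble
      · have hdd : deg f < deg g := bd ▸ ad
        rw [s3, if_neg (not_lt.2 hdd.le), if_pos hdd]
        exact bne
  · rcases b3 with bd | ⟨bd, ble, bne⟩
    · refine Or.inr ⟨by rw [s2, ad]; exact max_eq_left (ad ▸ bd.le), ?_, ?_⟩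
      · have hdd : deg g < deg f := ad ▸ bd
        rw [s3, if_pos hdd]
        exact ale
      · have hdd : deg g < deg f := ad ▸ bd
        rw [s3, if_pos hdd]
        exact ane
  -- both equal degrees
    · refine Or.inr ⟨by rw [s2, ad, bd, max_self], ?_, ?_⟩
      · have hdd : deg f = deg g := ad.trans bd.symm
        rw [s3, if_neg (by rw [hdd]; exact lt_irrefl _), if_neg (by rw [hdd]; exact lt_irrefl _)]
        -- q (lc f + lc g + lc h) (lc h)
        have step : q ((lc f + lc g) + lc h) (lc f + lc h) := by
          have := q.add (q.refl (lc f)) ble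
          rw [← add_assoc] at this
          exact this
        exact q.trans step ale
      · have hdd : deg f = deg g := ad.trans bd.symm
        rw [s3, if_neg (by rw [hdd]; exact lt_irrefl _), if_neg (by rw [hdd]; exact lt_irrefl _)]
        intro hc
        rcases total hidem hq (lc f) (lc g) with ht | ht
        · exact ane (q.trans (q.symm ht) hc)
        · exact bne (q.trans (q.symm ht) hc)

theorem lam_main (hidem : ∀ x : F, x + x = x) {q : RingCon F} (hq : IsPrimeCon q)
    {f₁ f₂ g₁ g₂ : AddMonoidAlgebra F Γ} (hf : LtRel q f₂ f₁) (hg : LtRel q g₂ g₁) :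
    ¬ LamRel q (f₁ * g₁ + f₂ * g₂) (f₁ * g₂ + f₂ * g₁) := by
  have hf₁ : f₁ ≠ 0 := lt_ne_right hf
  have hg₁ : g₁ ≠ 0 := lt_ne_right hg
  have h11 : f₁ * g₁ ≠ 0 := (mul_facts hf₁ hg₁).1
  -- f₂ * g₂ < f₁ * g₁
  have h22 : LtRel q (f₂ * g₂) (f₁ * g₁) := by
    by_cases hf₂ : f₂ = 0
    · subst hf₂; rw [zero_mul]; exact Or.inl ⟨rfl, h11⟩
    by_cases hg₂ : g₂ = 0
    · subst hg₂; rw [mul_zero]; exact Or.inl ⟨rfl, h11⟩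
    have s1 : LtRel q (f₂ * g₂) (f₁ * g₂) := lt_mulRight hq hf hg₂
    have s2 : LtRel q (f₁ * g₂) (f₁ * g₁) := by
      have := lt_mulRight hq hg hf₁
      rwa [mul_comm g₂ f₁, mul_comm g₁ f₁] at this
    exact lt_trans' hq s1 s2
  -- LHS ~ f₁ g₁
  have hL : LamRel q (f₁ * g₁ + f₂ * g₂) (f₁ * g₁) := by
    have := lam_le_absorb hidem (Or.inr h22)
    rwa [add_comm] at this
  -- RHS < f₁ g₁
  have hR : LtRel q (f₁ * g₂ + f₂ * g₁) (f₁ * g₁) := by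
    refine lt_add hq hidem ?_ ?_
    · have := lt_mulRight hq hg hf₁
      rwa [mul_comm g₂ f₁, mul_comm g₁ f₁] at this
    · exact lt_mulRight hq hf hg₁
  intro hC
  exact lt_not_lam hR (lam_trans (lam_symm hC) hL)

theorem lam_prime (hidem : ∀ x : F, x + x = x) {q : RingCon F} (hq : IsPrimeCon q) :
    IsPrimeCon (Lam hidem q : RingCon (AddMonoidAlgebra F Γ)) := by
  constructor
  · refine ⟨0, 1, ?_⟩
    intro h
    rcases ((lam_rel_iff hidem).1 h) with ⟨_, h2⟩ | ⟨h1, _⟩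
    · exact one_ne_zero h2
    · exact h1 rfl
  · intro a₁ a₂ b₁ b₂ h
    by_contra hcon
    push_neg at hcon
    obtain ⟨hna, hnb⟩ := hcon
    have hA := lam_or_lt hidem hq a₁ a₂
    have hB := lam_or_lt hidem hq b₁ b₂
    rcases hA with hA | hA | hA
    · exact hna hA
    all_goals rcases hB with hB | hB | hB
    · exact hnb hB
    · -- a₁ < a₂, b₁ < b₂ : dominant a₂ b₂ on LHS
      refine lam_main hidem hq (f₁ := a₂) (f₂ := a₁) (g₁ := b₂) (g₂ := b₁) hA hB ?_
      have h' : LamRel q (a₁ * b₁ + a₂ * b₂) (a₁ * b₂ + a₂ * b₁) := h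
      rw [add_comm (a₁ * b₁) (a₂ * b₂), add_comm (a₁ * b₂) (a₂ * b₁)] at h'
      exact h'
    · -- a₁ < a₂, b₂ < b₁ : dominant a₂ b₁ on RHS
      refine lam_main hidem hq (f₁ := a₂) (f₂ := a₁) (g₁ := b₁) (g₂ := b₂) hA hB ?_
      have h' : LamRel q (a₁ * b₁ + a₂ * b₂) (a₁ * b₂ + a₂ * b₁) := h
      have h'' := lam_symm h'
      rw [add_comm (a₁ * b₂) (a₂ * b₁), add_comm (a₁ * b₁) (a₂ * b₂)] at h''
      exact h''
    · exact hnb hB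
    · -- a₂ < a₁, b₁ < b₂ : dominant a₁ b₂ on RHS
      refine lam_main hidem hq (f₁ := a₁) (f₂ := a₂) (g₁ := b₂) (g₂ := b₁) hA hB ?_
      exact lam_symm h
    · -- a₂ < a₁, b₂ < b₁ : dominant a₁ b₁ on LHS
      exact lam_main hidem hq (f₁ := a₁) (f₂ := a₂) (g₁ := b₁) (g₂ := b₂) hA hB h


theorem mapd_facts (hidem : ∀ x : F, x + x = x) (σ : Γ →+ Γ') (hσ : Monotone σ)
    {f : AddMonoidAlgebra F Γ} (hf : f ≠ 0) :
    AddMonoidAlgebra.mapDomain σ f ≠ 0 ∧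
      deg (AddMonoidAlgebra.mapDomain σ f : AddMonoidAlgebra F Γ') = σ (deg f) := by
  classical
  have happ : ∀ x : Γ', (AddMonoidAlgebra.mapDomain σ f).coeff x
      = ∑ a ∈ f.coeff.support, (if σ a = x then f.coeff a else 0) := by
    intro x
    rw [AddMonoidAlgebra.coeff_mapDomain, Finsupp.mapDomain, Finsupp.sum_apply]
    rw [Finsupp.sum]
    apply Finset.sum_congr rfl
    intro a _
    rw [Finsupp.single_apply]
  have hMne : (AddMonoidAlgebra.mapDomain σ f).coeff (σ (deg f)) ≠ 0 := by
    rw [happ]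
    refine sum_ne_zero hidem (deg_mem hf) ?_
    rw [if_pos rfl]
    exact Finsupp.mem_support_iff.1 (deg_mem hf)
  have hub : ∀ u ∈ (AddMonoidAlgebra.mapDomain σ f).coeff.support, u ≤ σ (deg f) := by
    intro u hu
    rw [AddMonoidAlgebra.coeff_mapDomain] at hu
    have := Finsupp.mapDomain_support hu
    rw [Finset.mem_image] at this
    obtain ⟨a, ha, rfl⟩ := this
    exact hσ (le_deg ha)
  obtain ⟨h1, h2, _⟩ := deg_char hMne hub
  exact ⟨h1, h2⟩

/-- The congruence on `F` identifying all nonzero elements. -/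
def qB (hidem : ∀ x : F, x + x = x) : RingCon F where
  r a b := (a = 0 ↔ b = 0)
  iseqv := ⟨fun _ => Iff.rfl, Iff.symm, Iff.trans⟩
  add' := by
    intro a b c d h1 h2
    constructor
    · intro h
      obtain ⟨ha, hc⟩ := zsf hidem h
      rw [h1.1 ha, h2.1 hc, add_zero]
    · intro h
      obtain ⟨hb, hd⟩ := zsf hidem h
      rw [h1.2 hb, h2.2 hd, add_zero]
  mul' := by
    intro a b c d h1 h2
    constructor
    · intro h
      rcases mul_eq_zero.1 h with h' | h'
      · rw [h1.1 h', zero_mul]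
      · rw [h2.1 h', mul_zero]
    · intro h
      rcases mul_eq_zero.1 h with h' | h'
      · rw [h1.2 h', zero_mul]
      · rw [h2.2 h', mul_zero]

theorem qB_rel {hidem : ∀ x : F, x + x = x} {a b : F} :
    (qB hidem) a b ↔ (a = 0 ↔ b = 0) := Iff.rfl

theorem qB_prime (hidem : ∀ x : F, x + x = x) : IsPrimeCon (qB hidem) := by
  constructor
  · exact ⟨0, 1, by rw [qB_rel]; simp⟩
  · intro a₁ a₂ b₁ b₂ h
    rw [qB_rel] at h
    rw [qB_rel, qB_rel]
    have addz : ∀ x y : F, x + y = 0 ↔ (x = 0 ∧ y = 0) := by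
      intro x y
      exact ⟨fun hh => zsf hidem hh, fun hh => by rw [hh.1, hh.2, add_zero]⟩
    rw [addz, addz, mul_eq_zero, mul_eq_zero, mul_eq_zero, mul_eq_zero] at h
    tauto

theorem lam_mono (hidem : ∀ x : F, x + x = x) {q q' : RingCon F} (h : q ≤ q') :
    (Lam hidem q : RingCon (AddMonoidAlgebra F Γ)) ≤ Lam hidem q' := by
  rw [RingCon.le_def]
  intro f g hfg
  rw [lam_rel_iff hidem] at hfg ⊢
  rcases hfg with ⟨h1, h2⟩ | ⟨h1, h2, h3, h4⟩
  · exact Or.inl ⟨h1, h2⟩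
  · exact Or.inr ⟨h1, h2, h3, RingCon.le_def.1 h h4⟩



theorem rel_zero_eq_zero {q : RingCon F} (hq : IsPrimeCon q) {a : F} (h : q a 0) : a = 0 := by
  by_contra ha
  have := q.mul h (q.refl a⁻¹)
  rw [mul_inv_cancel₀ ha, zero_mul] at this
  obtain ⟨x, y, hxy⟩ := hq.1
  have hx : q 0 x := by simpa using q.mul (q.symm this) (q.refl x)
  have hy : q 0 y := by simpa using q.mul (q.symm this) (q.refl y)
  exact hxy (q.trans (q.symm hx) hy)

section FinN
variable (n : ℕ)

/-- truncation of exponents: keep coordinates `< j`. -/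
noncomputable def βaux (j : ℕ) : (Fin n →₀ ℤ) →+ Lex (ℕ →₀ ℤ) where
  toFun u := toLex (Finsupp.filter (fun k => k < j) (Finsupp.mapDomain Fin.val u))
  map_zero' := by
    have h : Finsupp.filter (fun k => k < j) (Finsupp.mapDomain (Fin.val : Fin n → ℕ) 0)
        = (0 : ℕ →₀ ℤ) := by rw [Finsupp.mapDomain_zero, Finsupp.filter_zero]
    exact congrArg toLex h
  map_add' u v := by
    have h : Finsupp.filter (fun k => k < j) (Finsupp.mapDomain Fin.val (u + v))
        = Finsupp.filter (fun k => k < j) (Finsupp.mapDomain Fin.val u)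
          + Finsupp.filter (fun k => k < j) (Finsupp.mapDomain Fin.val v) := by
      rw [Finsupp.mapDomain_add, Finsupp.filter_add]
    exact congrArg toLex h

/-- truncation on the target. -/
noncomputable def τ (j : ℕ) : Lex (ℕ →₀ ℤ) →+ Lex (ℕ →₀ ℤ) where
  toFun x := toLex (Finsupp.filter (fun k => k < j) (ofLex x))
  map_zero' := by
    have h : Finsupp.filter (fun k => k < j) (ofLex (0 : Lex (ℕ →₀ ℤ))) = (0 : ℕ →₀ ℤ) :=
      Finsupp.filter_zero _
    exact congrArg toLex h
  map_add' u v := by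
    have h : Finsupp.filter (fun k => k < j) (ofLex (u + v))
        = Finsupp.filter (fun k => k < j) (ofLex u)
          + Finsupp.filter (fun k => k < j) (ofLex v) := Finsupp.filter_add
    exact congrArg toLex h

theorem tau_mono (j : ℕ) : Monotone (τ j) := by
  intro x y h
  rcases h.lt_or_eq with hlt | heq
  · rw [Finsupp.Lex.lt_iff] at hlt
    obtain ⟨i, hsm, hi⟩ := hlt
    by_cases hij : (i : ℕ) < j
    · apply le_of_lt
      rw [Finsupp.Lex.lt_iff]
      refine ⟨i, ?_, ?_⟩
      · intro k hk
        show (Finsupp.filter _ (ofLex x)) k = (Finsupp.filter _ (ofLex y)) k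
        rw [Finsupp.filter_apply, Finsupp.filter_apply]
        by_cases hkj : k < j
        · rw [if_pos hkj, if_pos hkj, hsm k hk]
        · rw [if_neg hkj, if_neg hkj]
      · show (Finsupp.filter _ (ofLex x)) i < (Finsupp.filter _ (ofLex y)) i
        rw [Finsupp.filter_apply, Finsupp.filter_apply, if_pos hij, if_pos hij]
        exact hi
    · apply le_of_eq
      show toLex (Finsupp.filter (fun k => k < j) (ofLex x))
        = toLex (Finsupp.filter (fun k => k < j) (ofLex y))
      refine congrArg toLex ?_
      ext k
      rw [Finsupp.filter_apply, Finsupp.filter_apply]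
      by_cases hkj : k < j
      · rw [if_pos hkj, if_pos hkj]
        exact hsm k (lt_of_lt_of_le hkj (not_lt.1 hij))
      · rw [if_neg hkj, if_neg hkj]
  · rw [heq]

theorem tau_beta {j' j : ℕ} (h : j' ≤ j) (u : Fin n →₀ ℤ) :
    τ j' (βaux n j u) = βaux n j' u := by
  show toLex (Finsupp.filter (fun k => k < j')
      (Finsupp.filter (fun k => k < j) (Finsupp.mapDomain Fin.val u)))
    = toLex (Finsupp.filter (fun k => k < j') (Finsupp.mapDomain Fin.val u))
  refine congrArg toLex ?_
  ext k
  rw [Finsupp.filter_apply, Finsupp.filter_apply, Finsupp.filter_apply]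
  by_cases h1 : k < j'
  · rw [if_pos h1, if_pos h1, if_pos (lt_of_lt_of_le h1 h)]
  · rw [if_neg h1, if_neg h1]

/-- the map on Laurent series collapsing exponents to the first `j` coordinates. -/
noncomputable def ψ (j : ℕ) : AddMonoidAlgebra F (Fin n →₀ ℤ) →+* AddMonoidAlgebra F (Lex (ℕ →₀ ℤ)) :=
  AddMonoidAlgebra.mapDomainRingHom F (βaux n j)

theorem psi_apply (j : ℕ) (f : AddMonoidAlgebra F (Fin n →₀ ℤ)) :
    ψ n j f = AddMonoidAlgebra.mapDomain (βaux n j) f := rfl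

theorem psi_single (j : ℕ) (u : Fin n →₀ ℤ) (c : F) :
    ψ n j (single u c) = single (βaux n j u) c := by
  rw [psi_apply]
  exact AddMonoidAlgebra.mapDomain_single

theorem psi_comp {j' j : ℕ} (h : j' ≤ j) (f : AddMonoidAlgebra F (Fin n →₀ ℤ)) :
    ψ n j' f = AddMonoidAlgebra.mapDomain (τ j') (ψ n j f) := by
  rw [psi_apply, psi_apply, AddMonoidAlgebra.mapDomain, AddMonoidAlgebra.mapDomain,
    AddMonoidAlgebra.mapDomain, AddMonoidAlgebra.coeff_ofCoeff, ← Finsupp.mapDomain_comp]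
  congr 2
  funext u
  exact (tau_beta n h u).symm

theorem drop (hidem : ∀ x : F, x + x = x) {j' j : ℕ} (hj : j' ≤ j) (q : RingCon F) :
    (Lam hidem q : RingCon (AddMonoidAlgebra F (Lex (ℕ →₀ ℤ)))).comap (ψ n j) ≤
      (Lam hidem (qB hidem)).comap (ψ n j') := by
  rw [RingCon.le_def]
  intro f g hfg
  have h1 : LamRel q (ψ n j f) (ψ n j g) := (lam_rel_iff hidem).1 hfg
  show (Lam hidem (qB hidem)) (ψ n j' f) (ψ n j' g)
  rw [lam_rel_iff, psi_comp n hj f, psi_comp n hj g]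
  rcases h1 with ⟨ha, hb⟩ | ⟨ha, hb, hdeg, _⟩
  · rw [ha, hb]
    exact Or.inl ⟨AddMonoidAlgebra.mapDomain_zero _, AddMonoidAlgebra.mapDomain_zero _⟩
  · obtain ⟨m1, m2⟩ := mapd_facts hidem (τ j') (tau_mono j') ha
    obtain ⟨m3, m4⟩ := mapd_facts hidem (τ j') (tau_mono j') hb
    refine Or.inr ⟨m1, m3, by rw [m2, m4, hdeg], ?_⟩
    rw [qB_rel]
    exact iff_of_false (lc_ne m1) (lc_ne m3)

theorem beta_single_pos {j : ℕ} {i : Fin n} (h : (i : ℕ) < j) :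
    βaux n j (Finsupp.single i (1:ℤ)) = toLex (Finsupp.single (i : ℕ) (1:ℤ)) := by
  show toLex _ = _
  refine congrArg toLex ?_
  rw [Finsupp.mapDomain_single]
  exact Finsupp.filter_single_of_pos (fun k => k < j) h

theorem beta_single_neg {j : ℕ} {i : Fin n} (h : ¬ (i : ℕ) < j) :
    βaux n j (Finsupp.single i (1:ℤ)) = 0 := by
  show toLex _ = _
  have h2 : Finsupp.filter (fun k => k < j) (Finsupp.mapDomain Fin.val (Finsupp.single i (1:ℤ)))
      = (0 : ℕ →₀ ℤ) := by
    rw [Finsupp.mapDomain_single]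
    exact Finsupp.filter_single_of_neg (fun k => k < j) h
  exact congrArg toLex h2

theorem toLex_single_ne (k : ℕ) : toLex (Finsupp.single k (1:ℤ)) ≠ (0 : Lex (ℕ →₀ ℤ)) := by
  intro h
  have : Finsupp.single k (1:ℤ) = 0 := h
  rw [Finsupp.single_eq_zero] at this
  exact one_ne_zero this

theorem step_lt (hidem : ∀ x : F, x + x = x) (q' : RingCon F) {j : ℕ}
    (hj1 : 1 ≤ j) (hjn : j ≤ n) :
    ∃ f g : AddMonoidAlgebra F (Fin n →₀ ℤ),
      ((Lam hidem (qB hidem)).comap (ψ n (j-1))) f g ∧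
        ¬ ((Lam hidem q').comap (ψ n j)) f g := by
  have hi0 : j - 1 < n := by omega
  set i0 : Fin n := ⟨j - 1, hi0⟩ with hi0def
  set u : Fin n →₀ ℤ := Finsupp.single i0 1 with hu
  refine ⟨single u 1, 1, ?_, ?_⟩
  · show (Lam hidem (qB hidem)) (ψ n (j-1) (single u 1)) (ψ n (j-1) 1)
    have h1 : ψ n (j-1) (single u (1:F)) = single (0 : Lex (ℕ →₀ ℤ)) (1:F) := by
      rw [psi_single, hu, beta_single_neg n (by simp [hi0def])]
    have h2 : ψ n (j-1) (1 : AddMonoidAlgebra F (Fin n →₀ ℤ)) = single (0 : Lex (ℕ →₀ ℤ)) 1 := by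
      rw [map_one, AddMonoidAlgebra.one_def]
    rw [h1, h2]
    exact (Lam hidem (qB hidem)).refl _
  · intro hcon
    have h : LamRel q' (ψ n j (single u 1)) (ψ n j 1) := (lam_rel_iff hidem).1 hcon
    have h1 : ψ n j (single u (1:F)) = single (toLex (Finsupp.single (j-1 : ℕ) (1:ℤ))) (1:F) := by
      rw [psi_single, hu, beta_single_pos n (by simp [hi0def]; omega)]
    have h2 : ψ n j (1 : AddMonoidAlgebra F (Fin n →₀ ℤ)) = single (0 : Lex (ℕ →₀ ℤ)) 1 := by
      rw [map_one, AddMonoidAlgebra.one_def]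
    rw [h1, h2] at h
    rcases h with ⟨ha, _⟩ | ⟨_, _, hdeg, _⟩
    · exact (single_facts (one_ne_zero : (1:F) ≠ 0)).1 ha
    · rw [(single_facts (one_ne_zero : (1:F) ≠ 0)).2.1,
        (single_facts (one_ne_zero : (1:F) ≠ 0)).2.1] at hdeg
      exact toLex_single_ne _ hdeg

theorem wit_ne {q q' : RingCon F} (hq' : IsPrimeCon q') {a b : F}
    (hab : q' a b) (hnab : ¬ q a b) : a ≠ 0 ∧ b ≠ 0 := by
  constructor
  · rintro rfl
    have : b = 0 := rel_zero_eq_zero hq' (q'.symm hab)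
    subst this
    exact hnab (q.refl 0)
  · rintro rfl
    have : a = 0 := rel_zero_eq_zero hq' hab
    subst this
    exact hnab (q.refl 0)

set_option maxHeartbeats 2000000 in
theorem lower_bound (hidem : ∀ x : F, x + x = x) (hn : 1 ≤ n) {d : ℕ}
    (hac : ∃ c : Fin (d+1) → RingCon F, StrictMono c ∧ ∀ i, IsPrimeCon (c i)) :
    ∃ c : Fin (d + n + 1) → RingCon (AddMonoidAlgebra F (Fin n →₀ ℤ)),
      StrictMono c ∧ ∀ i, IsPrimeCon (c i) := by
  obtain ⟨q, hqmono, hqprime⟩ := hac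
  classical
  refine ⟨fun i => if (i : ℕ) < d + 1
    then (Lam hidem (q ⟨min (i : ℕ) d, by omega⟩)).comap (ψ n n)
    else (Lam hidem (qB hidem)).comap (ψ n (n - ((i : ℕ) - d))), ?_, ?_⟩
  · rw [Fin.strictMono_iff_lt_succ]
    intro i
    simp only [Fin.coe_castSucc, Fin.val_succ]
    set v := (i : ℕ) with hv
    by_cases h1 : v + 1 < d + 1
    · rw [if_pos (by omega : v < d + 1), if_pos h1]
      have hidx : (⟨min v d, by omega⟩ : Fin (d+1)) < ⟨min (v+1) d, by omega⟩ := by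
        rw [Fin.mk_lt_mk]; omega
      refine lt_iff_le_not_ge.mpr ⟨comap_mono _ (lam_mono hidem (hqmono.monotone hidx.le)), ?_⟩
      intro hcon
      obtain ⟨a, b, hab, hnab⟩ := not_le_witness (hqmono hidx).not_ge
      obtain ⟨ha, hb⟩ := wit_ne (hqprime _) hab hnab
      have hrel : (Lam hidem (q ⟨min (v+1) d, by omega⟩))
          (ψ n n (single (0 : Fin n →₀ ℤ) a)) (ψ n n (single 0 b)) := by
        rw [psi_single, psi_single, (βaux n n).map_zero, lam_rel_iff hidem]
        exact Or.inr ⟨(single_facts ha).1, (single_facts hb).1,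
          by rw [(single_facts ha).2.1, (single_facts hb).2.1],
          by rw [(single_facts ha).2.2, (single_facts hb).2.2]; exact hab⟩
      have h3 := RingCon.le_def.1 hcon hrel
      have h4 : LamRel (q ⟨min v d, by omega⟩)
          (ψ n n (single (0 : Fin n →₀ ℤ) a)) (ψ n n (single 0 b)) := (lam_rel_iff hidem).1 h3
      rw [psi_single, psi_single, (βaux n n).map_zero] at h4
      rcases h4 with ⟨hz, _⟩ | ⟨_, _, _, hq4⟩
      · exact (single_facts ha).1 hz
      · rw [(single_facts ha).2.2, (single_facts hb).2.2] at hq4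
        exact hnab hq4
    · by_cases h2 : v < d + 1
      · -- v = d : drop from (q d, level n) to (qB, level n-1)
        rw [if_pos h2, if_neg h1]
        have harith : n - ((v + 1) - d) = n - 1 := by omega
        rw [harith]
        refine lt_iff_le_not_ge.mpr ⟨?_, ?_⟩
        · exact drop n hidem (by omega) _
        · intro hcon
          obtain ⟨f, g, hrel, hnrel⟩ := step_lt n hidem
            (q ⟨min v d, by omega⟩) hn (le_refl n)
          have : n - 1 = n - 1 := rfl
          exact hnrel (RingCon.le_def.1 hcon hrel)
      · -- both in qB region
        rw [if_neg h2, if_neg h1]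
        have hj1 : 1 ≤ n - (v - d) := by omega
        have hjn : n - (v - d) ≤ n := by omega
        have harith : n - ((v + 1) - d) = (n - (v - d)) - 1 := by omega
        rw [harith]
        refine lt_iff_le_not_ge.mpr ⟨?_, ?_⟩
        · exact drop n hidem (by omega) _
        · intro hcon
          obtain ⟨f, g, hrel, hnrel⟩ := step_lt n hidem (qB hidem) hj1 hjn
          exact hnrel (RingCon.le_def.1 hcon hrel)
  · intro i
    dsimp only
    by_cases h : (i : ℕ) < d + 1
    · rw [if_pos h]
      exact comap_prime _ (lam_prime hidem (hqprime _))
    · rw [if_neg h]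
      exact comap_prime _ (lam_prime hidem (qB_prime hidem))


end FinN
end LT

section Upper
open AddMonoidAlgebra
variable {F : Type*} [Semifield F] {n : ℕ}

local notation "G" => (Fin n →₀ ℤ)
local notation "LA" => AddMonoidAlgebra F (Fin n →₀ ℤ)

theorem idemA (hidem : ∀ x : F, x + x = x) (f : LA) : f + f = f := by
  ext u; show f.coeff u + f.coeff u = f.coeff u; exact hidem _

theorem single_unit_rel {P : RingCon LA} {u v : G} {c d : F} (hc : c ≠ 0)
    (h : P (single u c) (single v d)) :
    P (single 0 1) (single (v - u) (d * c⁻¹)) := by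
  have := P.mul h (P.refl (single (-u) c⁻¹))
  refine relOfEq this ?_ ?_
  · rw [single_mul_single]; congr 1 <;> simp [mul_inv_cancel₀ hc]
  · rw [single_mul_single]; congr 1; abel

theorem single_nonzero_not_rel_zero {P : RingCon LA} (hP : IsPrimeCon P) {u : G} {c : F}
    (hc : c ≠ 0) : ¬ P (single u c) 0 := by
  intro h
  have := P.mul h (P.refl (single (-u) c⁻¹))
  have h1 : P (single 0 1) 0 := by
    refine relOfEq this ?_ (by simp)
    rw [single_mul_single]; congr 1 <;> simp [mul_inv_cancel₀ hc]
  rw [← one_def] at h1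
  exact not01 hP (P.symm h1)

theorem exists_term {P : RingCon LA} (hidem : ∀ x : F, x + x = x) (hP : IsPrimeCon P)
    (f : LA) : f = 0 ∨ ∃ (u : G) (c : F), c ≠ 0 ∧ P f (single u c) := by
  obtain ⟨f, rfl⟩ : ∃ g, AddMonoidAlgebra.ofCoeff g = f := ⟨f.coeff, rfl⟩
  refine Finsupp.induction (motive := fun f => AddMonoidAlgebra.ofCoeff f = 0 ∨
    ∃ (u : G) (c : F), c ≠ 0 ∧ P (AddMonoidAlgebra.ofCoeff f) (single u c)) f (Or.inl rfl) ?_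
  intro a b g _ hb ih
  right
  rcases ih with hg0 | ⟨u, c, hc, hg⟩
  · obtain rfl : g = 0 := AddMonoidAlgebra.ofCoeff_eq_zero.1 hg0
    exact ⟨a, b, hb, by rw [add_zero]; exact P.refl _⟩
  · have h1 : P (AddMonoidAlgebra.ofCoeff (Finsupp.single a b + g)) ((single a b : LA) + single u c) :=
      P.add (P.refl (single a b)) hg
    rcases total (idemA hidem) hP (single a b) (single u c) with h2 | h2
    · exact ⟨a, b, hb, P.trans h1 h2⟩
    · exact ⟨u, c, hc, P.trans h1 h2⟩

/-- The subgroup of exponents whose monomial is `P`-related to a nonzero constant. -/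
noncomputable def KSet (P : RingCon LA) : AddSubgroup G where
  carrier := {w | ∃ e : F, e ≠ 0 ∧ P (single w 1) (single 0 e)}
  zero_mem' := ⟨1, one_ne_zero, P.refl _⟩
  add_mem' := by
    rintro w w' ⟨e, he, hw⟩ ⟨e', he', hw'⟩
    refine ⟨e * e', mul_ne_zero he he', ?_⟩
    have := P.mul hw hw'
    refine relOfEq this ?_ ?_ <;> rw [single_mul_single] <;> simp
  neg_mem' := by
    rintro w ⟨e, he, hw⟩
    refine ⟨e⁻¹, inv_ne_zero he, ?_⟩
    have h2 := P.mul hw (P.refl (single (-w) e⁻¹))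
    refine P.symm (relOfEq h2 ?_ ?_) <;> rw [single_mul_single]
    · congr 1 <;> simp
    · congr 1 <;> simp [mul_inv_cancel₀ he]

theorem KSet_mono {P Q : RingCon LA} (h : P ≤ Q) : (KSet P : Set G) ⊆ KSet Q := by
  rintro w ⟨e, he, hw⟩
  exact ⟨e, he, (RingCon.le_def.1 h) hw⟩

theorem claimA (hidem : ∀ x : F, x + x = x) {P Q : RingCon LA}
    (hP : IsPrimeCon P) (hQ : IsPrimeCon Q)
    (hle : P ≤ Q) (hne : ¬ Q ≤ P)
    (hres : ∀ a b : F, Q (single 0 a) (single 0 b) → P (single 0 a) (single 0 b)) :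
    ∃ w : G, w ∈ KSet Q ∧ w ∉ KSet P := by
  rw [RingCon.le_def] at hne
  push_neg at hne
  obtain ⟨f, g, hQfg, hnP⟩ := hne
  rcases exists_term hidem hP f with rfl | ⟨u, c, hc, hfu⟩
  · rcases exists_term hidem hP g with rfl | ⟨v, d, hd, hgv⟩
    · exact absurd (P.refl 0) hnP
    · exfalso
      have h1 : Q 0 (single v d) := Q.trans hQfg (RingCon.le_def.1 hle hgv)
      have h2 := Q.mul h1 (Q.refl (single (-v) d⁻¹))
      have h3 : Q 0 (single 0 1) := by
        refine relOfEq h2 (by simp) ?_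
        rw [single_mul_single]; congr 1 <;> simp [mul_inv_cancel₀ hd]
      rw [← one_def] at h3
      exact not01 hQ h3
  · rcases exists_term hidem hP g with rfl | ⟨v, d, hd, hgv⟩
    · exfalso
      have h1 : Q (single u c) 0 := Q.trans (Q.symm (RingCon.le_def.1 hle hfu)) hQfg
      exact single_nonzero_not_rel_zero hQ hc h1
    · have hQ' : Q (single u c) (single v d) :=
        Q.trans (Q.symm (RingCon.le_def.1 hle hfu))
          (Q.trans hQfg (RingCon.le_def.1 hle hgv))
      have hnP' : ¬ P (single u c) (single v d) := fun h =>
        hnP (P.trans hfu (P.trans h (P.symm hgv)))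
      set w := v - u with hw
      set k := d * c⁻¹ with hk
      have hkne : k ≠ 0 := mul_ne_zero hd (inv_ne_zero hc)
      have h1 : Q (single 0 1) (single w k) := single_unit_rel hc hQ'
      have h2 : Q (single 0 k⁻¹) (single w 1) := by
        have := Q.mul h1 (Q.refl (single 0 k⁻¹))
        refine relOfEq this ?_ ?_ <;> rw [single_mul_single]
        · congr 1 <;> simp
        · congr 1 <;> simp [mul_inv_cancel₀ hkne]
      refine ⟨w, ⟨k⁻¹, inv_ne_zero hkne, Q.symm h2⟩, ?_⟩
      rintro ⟨e', he', hPw⟩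
      -- derive P (single u c) (single v d)
      have h3 : Q (single 0 e') (single 0 k⁻¹) :=
        Q.trans (Q.symm (RingCon.le_def.1 hle hPw)) (Q.symm h2)
      have h4 : P (single w 1) (single 0 k⁻¹) := P.trans hPw (hres _ _ h3)
      have h5 : P (single w k) (single 0 1) := by
        have := P.mul h4 (P.refl (single 0 k))
        refine relOfEq this ?_ ?_ <;> rw [single_mul_single]
        · congr 1 <;> simp
        · congr 1 <;> simp [inv_mul_cancel₀ hkne]
      have h6 : P (single v d) (single u c) := by
        have := P.mul h5 (P.refl (single u c))
        refine relOfEq this ?_ ?_ <;> rw [single_mul_single]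
        · congr 1
          · rw [hw]; abel
          · rw [hk]; field_simp
        · congr 1 <;> simp
      exact hnP' (P.symm h6)

theorem claimB (hidem : ∀ x : F, x + x = x) {P Q : RingCon LA}
    (hP : IsPrimeCon P) (hQ : IsPrimeCon Q) (hle : P ≤ Q)
    (hres : ∀ a b : F, Q (single 0 a) (single 0 b) → P (single 0 a) (single 0 b))
    {w : G} {z : ℤ} (hz : z ≠ 0) (hwQ : w ∈ KSet Q) (hzw : z • w ∈ KSet P) :
    w ∈ KSet P := by
  -- reduce to natural powers
  have natver : ∀ m : ℕ, m ≠ 0 → m • w ∈ KSet P → w ∈ KSet P := by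
    intro m hm hmem
    obtain ⟨c, hcne, hc⟩ := hmem
    obtain ⟨e, hene, he⟩ := hwQ
    have hQpow : Q ((single w (1:F)) ^ m) ((single 0 e) ^ m) := relPow he m
    have e1 : (single w (1:F) : LA) ^ m = single (m • w) 1 := by
      rw [single_pow, one_pow]
    have e2 : (single 0 e : LA) ^ m = single 0 (e ^ m) := by
      rw [single_pow, smul_zero]
    have hQ1 : Q (single (m • w) (1:F)) (single 0 (e ^ m)) := by
      rw [e1, e2] at hQpow; exact hQpow
    have hQ2 : Q (single 0 c) (single 0 (e ^ m)) :=
      Q.trans (Q.symm (RingCon.le_def.1 hle hc)) hQ1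
    have hP2 : P (single (m • w) (1:F)) (single 0 (e ^ m)) :=
      P.trans hc (hres _ _ hQ2)
    have hPpow : P ((single w (1:F)) ^ m) ((single 0 e) ^ m) := by
      rw [e1, e2]; exact hP2
    have hane : ¬ P (single w (1:F)) 0 := single_nonzero_not_rel_zero hP one_ne_zero
    have hbne : ¬ P (single (0:G) e) 0 := single_nonzero_not_rel_zero hP hene
    exact ⟨e, hene, pow_rel (idemA hidem) hP hane hbne (Nat.pos_of_ne_zero hm) hPpow⟩
  rcases Int.natAbs_eq z with hz' | hz'
  · refine natver z.natAbs (Int.natAbs_ne_zero.2 hz) ?_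
    have : (z.natAbs : ℤ) • w = z.natAbs • w := natCast_zsmul w z.natAbs
    rwa [hz', this] at hzw
  · refine natver z.natAbs (Int.natAbs_ne_zero.2 hz) ?_
    have h1 : z • w = -(z.natAbs • w) := by
      conv_lhs => rw [hz']
      rw [neg_smul, natCast_zsmul]
    rw [h1] at hzw
    simpa using (KSet P).neg_mem hzw

/-- restriction of a congruence on the Laurent algebra to `F`. -/
noncomputable def res (P : RingCon LA) : RingCon F :=
  P.comap (AddMonoidAlgebra.singleZeroRingHom)

theorem res_rel {P : RingCon LA} {a b : F} :
    res P a b ↔ P (single 0 a) (single 0 b) := Iff.rfl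

theorem upper_bound (hidem : ∀ x : F, x + x = x) {d : ℕ}
    (hFdim : ∀ (m : ℕ) (c : Fin (m + 1) → RingCon F),
      StrictMono c → (∀ i, IsPrimeCon (c i)) → m ≤ d)
    (m : ℕ) (P : Fin (m + 1) → RingCon LA)
    (hmono : StrictMono P) (hprime : ∀ i, IsPrimeCon (P i)) : m ≤ d + n := by
  classical
  set p : Fin (m + 1) → RingCon F := fun i => res (P i) with hp
  have pmono : Monotone p := fun i j hij => comap_mono _ (hmono.monotone hij)
  have pprime : ∀ i, IsPrimeCon (p i) := fun i => comap_prime _ (hprime i)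
  set S : Finset (Fin m) := Finset.univ.filter (fun i => p i.castSucc = p i.succ) with hS
  have hsame : ∀ i : Fin m, i ∈ S → ∀ a b : F,
      (P i.succ) (single 0 a) (single 0 b) → (P i.castSucc) (single 0 a) (single 0 b) := by
    intro i hi a b hab
    have he : p i.castSucc = p i.succ := by simpa [hS] using hi
    have h2 : (p i.castSucc) a b := by rw [he]; exact hab
    exact h2
  have hstep : ∀ i : Fin m, i ∈ S →
      ∃ w : G, w ∈ KSet (P i.succ) ∧ w ∉ KSet (P i.castSucc) := by
    intro i hi
    have hlt : P i.castSucc < P i.succ := hmono (Fin.castSucc_lt_succ (i := i))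
    exact claimA hidem (hprime _) (hprime _) hlt.le
      (fun h => hlt.ne (le_antisymm hlt.le h)) (hsame i hi)
  choose w hw using hstep
  -- w is ℤ-linearly independent
  have hindep : LinearIndependent ℤ (fun i : {i : Fin m // i ∈ S} => w i i.2) := by
    rw [linearIndependent_iff']
    intro s g hsum
    by_contra hcon
    push_neg at hcon
    obtain ⟨i0, hi0s, hgi0⟩ := hcon
    set T := s.filter (fun i => g i ≠ 0) with hT
    have hTne : T.Nonempty := ⟨i0, by simp [hT, hi0s, hgi0]⟩
    set t := T.max' hTne with ht
    have htT : t ∈ T := T.max'_mem hTne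
    have htS : t ∈ s := (Finset.mem_filter.1 htT).1
    have hgt : g t ≠ 0 := (Finset.mem_filter.1 htT).2
    have hsum' : ∑ i ∈ s.erase t, g i • w i i.2 + g t • w t t.2 = 0 := by
      rw [Finset.sum_erase_add s _ htS]; exact hsum
    have hmem : g t • w t t.2 ∈ KSet (P ((t : Fin m)).castSucc) := by
      have heq : g t • w t t.2 = -∑ i ∈ s.erase t, g i • w i i.2 := by
        rw [add_comm] at hsum'
        exact eq_neg_of_add_eq_zero_left hsum'
      rw [heq]
      refine (KSet _).neg_mem (AddSubgroup.sum_mem _ ?_)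
      intro i his
      by_cases hgi : g i = 0
      · rw [hgi, zero_smul]; exact (KSet _).zero_mem
      · have hiT : i ∈ T := Finset.mem_filter.2 ⟨(Finset.mem_of_mem_erase his), hgi⟩
        have hile : i ≤ t := T.le_max' i hiT
        have hine : i ≠ t := Finset.ne_of_mem_erase his
        have hilt : (i : Fin m) < (t : Fin m) :=
          lt_of_le_of_ne (Subtype.coe_le_coe.mpr hile) (fun h => hine (Subtype.ext h))
        have h1 : (i : Fin m).succ ≤ ((t : Fin m)).castSucc :=
          Fin.succ_le_castSucc_iff.2 hilt
        have h2 : (KSet (P ((i : Fin m)).succ) : Set G) ⊆ KSet (P ((t : Fin m)).castSucc) :=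
          KSet_mono (hmono.monotone h1)
        exact (KSet _).zsmul_mem (h2 (hw i i.2).1) _
    have hfin := claimB hidem (hprime _) (hprime _)
      (hmono.monotone (Fin.castSucc_lt_succ (i := (t : Fin m))).le) (hsame _ t.2) hgt
      (hw t t.2).1 hmem
    exact (hw t t.2).2 hfin
  haveI : Module.Finite ℤ (Fin n →₀ ℤ) := Module.Finite.finsupp
  have hcardS : S.card ≤ n := by
    have h1 := hindep.fintype_card_le_finrank
    rw [Module.finrank_finsupp_self] at h1
    simpa [Fintype.card_coe, Fintype.card_fin] using h1
  -- strict chain from the complement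
  have hT'lt : ∀ i : Fin m, i ∈ Sᶜ → p i.castSucc < p i.succ := by
    intro i hi
    have hle : p i.castSucc ≤ p i.succ := pmono (Fin.castSucc_lt_succ (i := i)).le
    have hne : p i.castSucc ≠ p i.succ := by
      rw [Finset.mem_compl] at hi
      intro h
      exact hi (by simp [hS, h])
    exact lt_of_le_of_ne hle hne
  have hchain : (Sᶜ : Finset (Fin m)).card ≤ d := by
    set t' := (Sᶜ : Finset (Fin m)).card with ht'
    set e := (Sᶜ : Finset (Fin m)).orderIsoOfFin rfl with he
    set gidx : Fin (t' + 1) → Fin (m + 1) := fun k =>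
      if h : k.val = 0 then 0 else ((e ⟨k.val - 1, by omega⟩ : Fin m)).succ with hgidx
    have hc : StrictMono (fun k => p (gidx k)) := by
      rw [Fin.strictMono_iff_lt_succ]
      intro i
      have hsuccval : (i.succ : Fin (t' + 1)).val = i.val + 1 := rfl
      have hgsucc : gidx i.succ = ((e ⟨i.val, i.isLt⟩ : Fin m)).succ := by
        rw [hgidx]; simp
      by_cases h0 : i.val = 0
      · have hgcs : gidx i.castSucc = 0 := by
          rw [hgidx]; simp [Fin.coe_castSucc, h0]
        rw [hgcs, hgsucc]
        calc p 0 ≤ p ((e ⟨i.val, i.isLt⟩ : Fin m)).castSucc := pmono (Fin.zero_le _)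
          _ < p ((e ⟨i.val, i.isLt⟩ : Fin m)).succ := hT'lt _ (e ⟨i.val, i.isLt⟩).2
      · have hgcs : gidx i.castSucc =
            ((e ⟨i.val - 1, by omega⟩ : Fin m)).succ := by
          rw [hgidx]; simp [Fin.coe_castSucc, h0]
        rw [hgcs, hgsucc]
        have hlt : (⟨i.val - 1, by omega⟩ : Fin t') < ⟨i.val, i.isLt⟩ := by
          simp only [Fin.mk_lt_mk]; omega
        have hlt2 : (e ⟨i.val - 1, by omega⟩ : Fin m) < (e ⟨i.val, i.isLt⟩ : Fin m) := by
          exact_mod_cast e.strictMono hlt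
        have hle3 : ((e ⟨i.val - 1, by omega⟩ : Fin m)).succ ≤
            ((e ⟨i.val, i.isLt⟩ : Fin m)).castSucc := Fin.succ_le_castSucc_iff.2 hlt2
        calc p ((e ⟨i.val - 1, by omega⟩ : Fin m)).succ
            ≤ p ((e ⟨i.val, i.isLt⟩ : Fin m)).castSucc := pmono hle3
          _ < p ((e ⟨i.val, i.isLt⟩ : Fin m)).succ := hT'lt _ (e ⟨i.val, i.isLt⟩).2
    exact hFdim t' (fun k => p (gidx k)) hc (fun k => pprime _)
  have hcards : S.card + (Sᶜ : Finset (Fin m)).card = m := by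
    rw [Finset.card_add_card_compl, Fintype.card_fin]
  omega


end Upper
end KD

/-- For an additively idempotent semifield `F`,
`dim F(x₁, …, xₙ) = dim F + n`. -/
theorem stmt_11 (F : Type*) [Semifield F] (hidem : ∀ a : F, a + a = a)
    (n : ℕ) (hn : 1 ≤ n) (d : ℕ) (hd : HasKrullDim F d) :
    HasKrullDim (AddMonoidAlgebra F (Fin n →₀ ℤ)) (d + n) := by
  constructor
  · exact KD.lower_bound n hidem hn hd.1
  · intro m c hmono hprime
    exact KD.upper_bound hidem hd.2 m c hmono hprime
end

section
/- Let F be a semifield and C ⊆ F × F a reflexive, symmetric relation closed under coordinatewise addition and multiplication (i.e., (a1,b1),(a2,b2) ∈ C imply (a1+a2,b1+b2) ∈ C and (a1a2,b1b2) ∈ C). Then C is transitive, hence a congruence. -/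
/-- In a semifield, a reflexive symmetric relation closed under coordinatewise
addition and multiplication is transitive. -/
theorem stmt_12 (F : Type*) [Semifield F] (C : F → F → Prop)
    (hrefl : ∀ a : F, C a a) (hsymm : ∀ a b : F, C a b → C b a)
    (hadd : ∀ a₁ b₁ a₂ b₂ : F, C a₁ b₁ → C a₂ b₂ → C (a₁ + a₂) (b₁ + b₂))
    (hmul : ∀ a₁ b₁ a₂ b₂ : F, C a₁ b₁ → C a₂ b₂ → C (a₁ * a₂) (b₁ * b₂)) :
    ∀ a b c : F, C a b → C b c → C a c := by
  intro a b c hab hbc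
  by_cases hb : b = 0
  · subst hb
    have := hadd a 0 0 c hab hbc
    simpa using this
  · have h1 : C (a * b⁻¹) 1 := by
      have := hmul a b b⁻¹ b⁻¹ hab (hrefl b⁻¹)
      rwa [mul_inv_cancel₀ hb] at this
    have := hmul (a * b⁻¹) 1 b c h1 hbc
    rwa [mul_assoc, inv_mul_cancel₀ hb, mul_one, one_mul] at this
end

section
/- Let R be a cancellative commutative semiring, C a congruence of R, and Frac(R) its semifield of fractions. A pair (a,b) ∈ Frac(R) × Frac(R) lies in the congruence generated by C in Frac(R) if and only if there exists s ∈ R, s ≠ 0, with (sa, sb) ∈ C. In particular, the generated congruence is proper if and only if ker(C) = {0}. -/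
/-- For a cancellative commutative semiring `R` with semifield of fractions `F`,
a pair lies in the congruence of `F` generated by a congruence `C` of `R` iff it
can be multiplied into `C` by some nonzero `s ∈ R`; and the generated congruence
is proper iff `ker C = {0}`. -/
theorem stmt_13 (R F : Type*) [CommSemiring R] [Semifield F]
    (hcanc : ∀ a b c : R, a * b = a * c → a = 0 ∨ b = c)
    (f : R →+* F) (hinj : Function.Injective f)
    (hfrac : ∀ x : F, ∃ r s : R, s ≠ 0 ∧ x = f r / f s)
    (C : RingCon R) :
    (∀ x y : F,
      ringConGen (fun u v : F => ∃ a b : R, C a b ∧ u = f a ∧ v = f b) x y ↔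
        ∃ s : R, s ≠ 0 ∧ ∃ a b : R, C a b ∧ f s * x = f a ∧ f s * y = f b) ∧
    ((∃ x y : F,
        ¬ ringConGen (fun u v : F => ∃ a b : R, C a b ∧ u = f a ∧ v = f b) x y) ↔
      ∀ a : R, C a 0 → a = 0) := by
  have hf0 : ∀ s : R, s ≠ 0 → f s ≠ 0 := by
    intro s hs h
    exact hs (hinj (by simpa using h))
  have hmulne : ∀ s t : R, s ≠ 0 → t ≠ 0 → s * t ≠ 0 := by
    intro s t hs ht h
    rcases hcanc s t 0 (by simpa using h) with h' | h'
    · exact hs h'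
    · exact ht h'
  obtain ⟨r0, s0, hs0, -⟩ := hfrac 0
  set rel : F → F → Prop := fun u v : F => ∃ a b : R, C a b ∧ u = f a ∧ v = f b
    with hrel
  -- the target relation
  set Drel : F → F → Prop := fun x y =>
    ∃ s : R, s ≠ 0 ∧ ∃ a b : R, C a b ∧ f s * x = f a ∧ f s * y = f b with hD
  have hrefl : ∀ x : F, Drel x x := by
    intro x
    obtain ⟨a, s, hs, rfl⟩ := hfrac x
    have hx : f s * (f a / f s) = f a := by
      rw [mul_div_assoc', mul_comm, mul_div_assoc, div_self (hf0 s hs), mul_one]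
    exact ⟨s, hs, a, a, C.refl a, hx, hx⟩
  have hsymm : ∀ {x y : F}, Drel x y → Drel y x := by
    rintro x y ⟨s, hs, a, b, hab, h1, h2⟩
    exact ⟨s, hs, b, a, C.symm hab, h2, h1⟩
  have htrans : ∀ {x y z : F}, Drel x y → Drel y z → Drel x z := by
    rintro x y z ⟨s, hs, a, b, hab, h1a, h1b⟩ ⟨t, ht, c, d, hcd, h2a, h2b⟩
    refine ⟨s * t, hmulne s t hs ht, t * a, s * d, ?_, ?_, ?_⟩
    · have key : t * b = s * c := hinj (by rw [map_mul, map_mul, ← h1b, ← h2a]; ring)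
      have c1 : C (t * a) (t * b) := C.mul (C.refl t) hab
      have c2 : C (s * c) (s * d) := C.mul (C.refl s) hcd
      rw [key] at c1
      exact C.trans c1 c2
    · rw [map_mul, map_mul, ← h1a]; ring
    · rw [map_mul, map_mul, ← h2b]; ring
  have hadd : ∀ {w x y z : F}, Drel w x → Drel y z → Drel (w + y) (x + z) := by
    rintro w x y z ⟨s, hs, a, b, hab, h1a, h1b⟩ ⟨t, ht, c, d, hcd, h2a, h2b⟩
    refine ⟨s * t, hmulne s t hs ht, t * a + s * c, t * b + s * d,
      C.add (C.mul (C.refl t) hab) (C.mul (C.refl s) hcd), ?_, ?_⟩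
    · rw [map_mul, map_add, map_mul, map_mul, ← h1a, ← h2a]; ring
    · rw [map_mul, map_add, map_mul, map_mul, ← h1b, ← h2b]; ring
  have hmul : ∀ {w x y z : F}, Drel w x → Drel y z → Drel (w * y) (x * z) := by
    rintro w x y z ⟨s, hs, a, b, hab, h1a, h1b⟩ ⟨t, ht, c, d, hcd, h2a, h2b⟩
    refine ⟨s * t, hmulne s t hs ht, a * c, b * d, C.mul hab hcd, ?_, ?_⟩
    · rw [map_mul, map_mul, ← h1a, ← h2a]; ring
    · rw [map_mul, map_mul, ← h1b, ← h2b]; ring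
  let D : RingCon F :=
    { r := Drel
      iseqv := ⟨hrefl, fun h => hsymm h, fun h1 h2 => htrans h1 h2⟩
      mul' := fun h1 h2 => hmul h1 h2
      add' := fun h1 h2 => hadd h1 h2 }
  have key : ∀ x y : F, ringConGen rel x y ↔ Drel x y := by
    intro x y
    constructor
    · intro h
      refine (RingCon.ringConGen_le (c := D)).mpr ?_ h
      rintro u v ⟨a, b, hab, rfl, rfl⟩
      exact ⟨s0, hs0, s0 * a, s0 * b, C.mul (C.refl s0) hab,
        (map_mul f s0 a).symm, (map_mul f s0 b).symm⟩
    · rintro ⟨s, hs, a, b, hab, h1, h2⟩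
      have hG : ringConGen rel (f a) (f b) :=
        RingConGen.Rel.of _ _ ⟨a, b, hab, rfl, rfl⟩
      rw [← h1, ← h2] at hG
      have := (ringConGen rel).mul ((ringConGen rel).refl (f s)⁻¹) hG
      simpa [inv_mul_cancel_left₀ (hf0 s hs)] using this
  refine ⟨key, ?_, ?_⟩
  · rintro ⟨x, y, hxy⟩ a hC
    by_contra ha0
    have hall : ∀ z : F, ringConGen rel z 0 := by
      intro z
      obtain ⟨p, q, hq, rfl⟩ := hfrac z
      refine (key _ _).mpr ⟨q * a, hmulne q a hq ha0, a * p, 0, ?_, ?_, ?_⟩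
      · simpa using C.mul hC (C.refl p)
      · rw [map_mul]
        have : f q * (f p / f q) = f p := by
          rw [mul_div_assoc', mul_comm, mul_div_assoc, div_self (hf0 q hq), mul_one]
        rw [mul_comm (f q) (f a), mul_assoc, this, ← map_mul, mul_comm a p, map_mul]
      · simp
    exact hxy ((ringConGen rel).trans (hall x) ((ringConGen rel).symm (hall y)))
  · intro hker
    refine ⟨1, 0, fun h => ?_⟩
    obtain ⟨s, hs, a, b, hab, h1, h2⟩ := (key 1 0).mp h
    have hb : b = 0 := hinj (by rw [← h2]; simp)
    rw [hb] at hab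
    have ha : a = 0 := hker a hab
    have hfs : f s = 0 := by rw [← mul_one (f s), h1, ha, map_zero]
    exact hs (hinj (by rw [hfs, map_zero]))
end

section
/- Let R be a cancellative commutative semiring and C a quotient-cancellative congruence of R with trivial kernel. Then the restriction to R of the congruence generated by C in Frac(R) equals C; moreover, for any congruence Q of Frac(R), the congruence generated in Frac(R) by the restriction Q ∩ (R × R) equals Q. -/
/-- For a quotient-cancellative congruence `C` with trivial kernel on a
cancellative commutative semiring `R`: the restriction to `R` of the congruence
generated by `C` in `Frac R` is `C`, and every congruence of `Frac R` is
generated by its restriction to `R`. -/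
theorem stmt_14 (R F : Type*) [CommSemiring R] [Semifield F]
    (hcanc : ∀ a b c : R, a * b = a * c → a = 0 ∨ b = c)
    (f : R →+* F) (hinj : Function.Injective f)
    (hfrac : ∀ x : F, ∃ r s : R, s ≠ 0 ∧ x = f r / f s)
    (C : RingCon R)
    (hQC : ∀ x a b : R, C (x * a) (x * b) → C x 0 ∨ C a b)
    (hker : ∀ a : R, C a 0 → a = 0) :
    (∀ a b : R,
      ringConGen (fun u v : F => ∃ p q : R, C p q ∧ u = f p ∧ v = f q)
        (f a) (f b) ↔ C a b) ∧
    ∀ Q : RingCon F,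
      ringConGen (fun u v : F => ∃ p q : R, Q (f p) (f q) ∧ u = f p ∧ v = f q)
        = Q := by
  -- basic facts
  have hf0 : ∀ s : R, s ≠ 0 → f s ≠ 0 := by
    intro s hs h
    exact hs (hinj (by rw [h, map_zero]))
  have hnzd : ∀ a b : R, a * b = 0 → a = 0 ∨ b = 0 := by
    intro a b h
    rcases hcanc a b 0 (by rw [h, mul_zero]) with h1 | h1
    · exact Or.inl h1
    · exact Or.inr h1
  have hmn : ∀ a b : R, a ≠ 0 → b ≠ 0 → a * b ≠ 0 := by
    intro a b ha hb h
    rcases hnzd a b h with h | h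
    · exact ha h
    · exact hb h
  haveI : Nontrivial R := ⟨⟨(hfrac 0).choose_spec.choose, 0,
    (hfrac 0).choose_spec.choose_spec.1⟩⟩
  constructor
  · -- Part 1
    intro a b
    constructor
    · intro h
      -- D is the explicit fraction congruence
      set D : F → F → Prop := fun x y =>
        ∃ r s p t : R, s ≠ 0 ∧ t ≠ 0 ∧ x = f r / f s ∧ y = f p / f t ∧ C (r * t) (p * s)
        with hD
      have key : ∀ x y : F,
          RingConGen.Rel (fun u v : F => ∃ p q : R, C p q ∧ u = f p ∧ v = f q) x y →
          D x y := by
        intro x y h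
        induction h with
        | of x y hxy =>
          obtain ⟨p, q, hpq, hx, hy⟩ := hxy
          exact ⟨p, 1, q, 1, one_ne_zero, one_ne_zero,
            by simp [hx], by simp [hy], by simpa using hpq⟩
        | refl x =>
          obtain ⟨r, s, hs, hx⟩ := hfrac x
          exact ⟨r, s, r, s, hs, hs, hx, hx, C.refl _⟩
        | symm _ ih =>
          obtain ⟨r, s, p, t, hs, ht, hx, hy, hC⟩ := ih
          exact ⟨p, t, r, s, ht, hs, hy, hx, C.symm hC⟩
        | trans _ _ ih1 ih2 =>
          obtain ⟨r, s, p, t, hs, ht, hx, hy, h1⟩ := ih1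
          obtain ⟨p', t', q, u, ht', hu, hy', hz, h2⟩ := ih2
          -- from f p / f t = f p' / f t' deduce C relation: p * t' = p' * t
          have heq : f p * f t' = f p' * f t := by
            have hm := hy.symm.trans hy'
            rwa [div_eq_div_iff (hf0 t ht) (hf0 t' ht')] at hm
          have hpt : p * t' = p' * t := by
            apply hinj; rw [map_mul, map_mul, heq]
          refine ⟨r, s, q, u, hs, hu, hx, hz, ?_⟩
          -- C (r*t)(p*s), C (p'*u)(q*t'), p*t' = p'*t  ⊢ C (r*u)(q*s)
          have h3 : C ((p * t') * (r * u)) ((p * t') * (q * s)) := by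
            have m1 : C ((r * t) * (p' * u)) ((p * s) * (q * t')) := C.mul h1 h2
            have e1 : (r * t) * (p' * u) = (p' * t) * (r * u) := by ring
            have e2 : (p * s) * (q * t') = (p * t') * (q * s) := by ring
            rw [e1, e2, ← hpt] at m1
            exact m1
          rcases hQC _ _ _ h3 with h4 | h4
          · -- p * t' = 0, so p = 0 (t' ≠ 0)
            have hpt0 : p * t' = 0 := hker _ h4
            have hp0 : p = 0 := by
              rcases hnzd _ _ hpt0 with h | h
              · exact h
              · exact absurd h ht'
            have hp'0 : p' = 0 := by
              have : p' * t = 0 := by rw [← hpt, hp0, zero_mul]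
              rcases hnzd _ _ this with h | h
              · exact h
              · exact absurd h ht
            -- then r = 0 and q = 0
            have hr0 : r = 0 := by
              have : C (r * t) 0 := by rwa [hp0, zero_mul] at h1
              rcases hnzd _ _ (hker _ this) with h | h
              · exact h
              · exact absurd h ht
            have hq0 : q = 0 := by
              have : C 0 (q * t') := by rwa [hp'0, zero_mul] at h2
              rcases hnzd _ _ (hker _ (C.symm this)) with h | h
              · exact h
              · exact absurd h ht'
            rw [hr0, hq0, zero_mul, zero_mul]
            exact C.refl 0
          · exact h4
        | add _ _ ih1 ih2 =>
          obtain ⟨r, s, p, t, hs, ht, hx, hy, h1⟩ := ih1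
          obtain ⟨r', s', p', t', hs', ht', hx', hy', h2⟩ := ih2
          refine ⟨r * s' + r' * s, s * s', p * t' + p' * t, t * t',
            hmn _ _ hs hs', hmn _ _ ht ht', ?_, ?_, ?_⟩
          · rw [hx, hx']
            field_simp [hf0 s hs, hf0 s' hs']
            simp only [map_add, map_mul]; ring
          · rw [hy, hy']
            field_simp [hf0 t ht, hf0 t' ht']
            simp only [map_add, map_mul]; ring
          · have m1 : C ((r * t) * (s' * t')) ((p * s) * (s' * t')) := C.mul h1 (C.refl _)
            have m2 : C ((r' * t') * (s * t)) ((p' * s') * (s * t)) := C.mul h2 (C.refl _)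
            have := C.add m1 m2
            have e1 : (r * t) * (s' * t') + (r' * t') * (s * t)
                = (r * s' + r' * s) * (t * t') := by ring
            have e2 : (p * s) * (s' * t') + (p' * s') * (s * t)
                = (p * t' + p' * t) * (s * s') := by ring
            rwa [e1, e2] at this
        | mul _ _ ih1 ih2 =>
          obtain ⟨r, s, p, t, hs, ht, hx, hy, h1⟩ := ih1
          obtain ⟨r', s', p', t', hs', ht', hx', hy', h2⟩ := ih2
          refine ⟨r * r', s * s', p * p', t * t',
            hmn _ _ hs hs', hmn _ _ ht ht', ?_, ?_, ?_⟩
          · rw [hx, hx', map_mul, map_mul, div_mul_div_comm]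
          · rw [hy, hy', map_mul, map_mul, div_mul_div_comm]
          · have := C.mul h1 h2
            have e1 : (r * t) * (r' * t') = (r * r') * (t * t') := by ring
            have e2 : (p * s) * (p' * s') = (p * p') * (s * s') := by ring
            rwa [e1, e2] at this
      have hD2 := key _ _ h
      obtain ⟨r, s, p, t, hs, ht, hx, hy, hC⟩ := hD2
      -- f a = f r / f s → a * s = r
      have har : a * s = r := by
        apply hinj
        rw [map_mul]
        rw [eq_div_iff (hf0 s hs)] at hx
        exact hx
      have hbp : b * t = p := by
        apply hinj
        rw [map_mul]
        rw [eq_div_iff (hf0 t ht)] at hy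
        exact hy
      rw [← har, ← hbp] at hC
      have : C ((s * t) * a) ((s * t) * b) := by
        have e1 : (s * t) * a = (a * s) * t := by ring
        have e2 : (s * t) * b = (b * t) * s := by ring
        rw [e1, e2]; exact hC
      rcases hQC _ _ _ this with h' | h'
      · exfalso
        rcases hnzd _ _ (hker _ h') with h'' | h''
        · exact hs h''
        · exact ht h''
      · exact h'
    · intro h
      exact RingConGen.Rel.of _ _ ⟨a, b, h, rfl, rfl⟩
  · -- Part 2
    intro Q
    apply le_antisymm
    · exact RingCon.ringConGen_le.mpr (by rintro x y ⟨p, q, hpq, rfl, rfl⟩; exact hpq)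
    · intro x y hxy
      obtain ⟨r, s, hs, hx⟩ := hfrac x
      obtain ⟨r', s', hs', hy⟩ := hfrac y
      have h1 : Q (f (r * s')) (f (r' * s)) := by
        have := Q.mul hxy (Q.refl (f s * f s'))
        have ex : x * (f s * f s') = f (r * s') := by
          rw [hx, map_mul]; field_simp [hf0 s hs]
        have ey : y * (f s * f s') = f (r' * s) := by
          rw [hy, map_mul]; field_simp [hf0 s' hs']
        rwa [ex, ey] at this
      have h2 : (ringConGen (fun u v : F => ∃ p q : R, Q (f p) (f q) ∧ u = f p ∧ v = f q))
          (f (r * s')) (f (r' * s)) :=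
        RingConGen.Rel.of _ _ ⟨r * s', r' * s, h1, rfl, rfl⟩
      have h3 := (ringConGen _).mul h2
        ((ringConGen _).refl ((f s * f s')⁻¹))
      have ex : f (r * s') * (f s * f s')⁻¹ = x := by
        rw [hx, map_mul]; field_simp [hf0 s hs, hf0 s' hs']
      have ey : f (r' * s) * (f s * f s')⁻¹ = y := by
        rw [hy, map_mul]; field_simp [hf0 s hs, hf0 s' hs']
      rwa [ex, ey] at h3
end

section
/- Let R be a cancellative commutative semiring and C a quotient-cancellative congruence with trivial kernel. Then C is a prime congruence of R if and only if the congruence generated by C in Frac(R) is a prime congruence of Frac(R). Moreover, a congruence Q of Frac(R) is prime if and only if its restriction to R is prime. -/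
/-- The restriction of a congruence of `Frac R` to `R`, as a congruence of `R`. -/
def restrictCon {R F : Type*} [CommSemiring R] [Semifield F] (f : R →+* F)
    (Q : RingCon F) : RingCon R where
  r a b := Q (f a) (f b)
  iseqv := ⟨fun _ => Q.refl _, Q.symm, Q.trans⟩
  add' := fun h₁ h₂ => by simpa [map_add] using Q.add h₁ h₂
  mul' := fun h₁ h₂ => by simpa [map_mul] using Q.mul h₁ h₂

private lemma restrictCon_iff {R F : Type*} [CommSemiring R] [Semifield F] (f : R →+* F)
    (Q : RingCon F) (a b : R) : restrictCon f Q a b ↔ Q (f a) (f b) := Iff.rfl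

/-- Congruences on a semifield respect inverses of nonzero elements. -/
private lemma ringCon_inv {F : Type*} [Semifield F] (Q : RingCon F) {s q : F}
    (hs : s ≠ 0) (hq : q ≠ 0) (h : Q s q) : Q s⁻¹ q⁻¹ := by
  have h2 := Q.mul (Q.refl (s⁻¹ * q⁻¹)) h
  have e1 : s⁻¹ * q⁻¹ * s = q⁻¹ := by field_simp; try ring
  have e2 : s⁻¹ * q⁻¹ * q = s⁻¹ := by field_simp; try ring
  rw [e1, e2] at h2
  exact Q.symm h2

/-- A congruence of the fraction semifield is prime iff its restriction is prime. -/
private lemma restrict_prime_iff {R F : Type*} [CommSemiring R] [Semifield F]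
    (f : R →+* F) (hinj : Function.Injective f)
    (hfrac : ∀ x : F, ∃ r s : R, s ≠ 0 ∧ x = f r / f s)
    (Q : RingCon F) : IsPrimeCon Q ↔ IsPrimeCon (restrictCon f Q) := by
  have hfne : ∀ s : R, s ≠ 0 → f s ≠ 0 := fun s hs h0 =>
    hs (hinj (h0.trans (map_zero f).symm))
  constructor
  · rintro ⟨⟨u, v, huv⟩, hprime⟩
    constructor
    · by_contra hx
      push_neg at hx
      simp only [restrictCon_iff, not_not] at hx
      apply huv
      obtain ⟨r, s, hs, hu⟩ := hfrac u
      obtain ⟨p, q, hq, hv⟩ := hfrac v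
      rw [hu, hv, div_eq_mul_inv, div_eq_mul_inv]
      exact Q.mul (hx r p) (ringCon_inv Q (hfne s hs) (hfne q hq) (hx s q))
    · intro a₁ a₂ b₁ b₂ h
      rw [restrictCon_iff] at h
      simp only [map_add, map_mul] at h
      exact hprime _ _ _ _ h
  · rintro ⟨⟨a, b, hab⟩, hprime⟩
    refine ⟨⟨f a, f b, hab⟩, ?_⟩
    intro u₁ u₂ v₁ v₂ h
    obtain ⟨r₁, s₁, hs₁, hu₁⟩ := hfrac u₁
    obtain ⟨r₂, s₂, hs₂, hu₂⟩ := hfrac u₂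
    obtain ⟨p₁, q₁, hq₁, hv₁⟩ := hfrac v₁
    obtain ⟨p₂, q₂, hq₂, hv₂⟩ := hfrac v₂
    have hfs₁ := hfne s₁ hs₁; have hfs₂ := hfne s₂ hs₂
    have hfq₁ := hfne q₁ hq₁; have hfq₂ := hfne q₂ hq₂
    have h' := Q.mul h (Q.refl (f s₁ * f s₂ * f q₁ * f q₂))
    have e1 : (u₁ * v₁ + u₂ * v₂) * (f s₁ * f s₂ * f q₁ * f q₂)
        = f (r₁ * s₂ * (p₁ * q₂) + r₂ * s₁ * (p₂ * q₁)) := by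
      rw [hu₁, hu₂, hv₁, hv₂]; simp only [map_add, map_mul]; field_simp
    have e2 : (u₁ * v₂ + u₂ * v₁) * (f s₁ * f s₂ * f q₁ * f q₂)
        = f (r₁ * s₂ * (p₂ * q₁) + r₂ * s₁ * (p₁ * q₂)) := by
      rw [hu₁, hu₂, hv₁, hv₂]; simp only [map_add, map_mul]; field_simp
    rw [e1, e2] at h'
    have hres : restrictCon f Q (r₁ * s₂ * (p₁ * q₂) + r₂ * s₁ * (p₂ * q₁))
        (r₁ * s₂ * (p₂ * q₁) + r₂ * s₁ * (p₁ * q₂)) := h'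
    rcases hprime _ _ _ _ hres with hL | hR
    · left
      rw [restrictCon_iff] at hL; simp only [map_mul] at hL
      have k := Q.mul hL (Q.refl ((f s₁)⁻¹ * (f s₂)⁻¹))
      have e3 : f r₁ * f s₂ * ((f s₁)⁻¹ * (f s₂)⁻¹) = u₁ := by
        rw [hu₁]; field_simp
      have e4 : f r₂ * f s₁ * ((f s₁)⁻¹ * (f s₂)⁻¹) = u₂ := by
        rw [hu₂]; field_simp
      rwa [e3, e4] at k
    · right
      rw [restrictCon_iff] at hR; simp only [map_mul] at hR
      have k := Q.mul hR (Q.refl ((f q₁)⁻¹ * (f q₂)⁻¹))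
      have e3 : f p₁ * f q₂ * ((f q₁)⁻¹ * (f q₂)⁻¹) = v₁ := by
        rw [hv₁]; field_simp
      have e4 : f p₂ * f q₁ * ((f q₁)⁻¹ * (f q₂)⁻¹) = v₂ := by
        rw [hv₂]; field_simp
      rwa [e3, e4] at k

/-- Extension of a QC congruence with trivial kernel to the fraction semifield. -/
private def extCon {R F : Type*} [CommSemiring R] [Semifield F]
    (hcanc : ∀ a b c : R, a * b = a * c → a = 0 ∨ b = c)
    (f : R →+* F) (hinj : Function.Injective f)
    (hfrac : ∀ x : F, ∃ r s : R, s ≠ 0 ∧ x = f r / f s)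
    (C : RingCon R)
    (hQC : ∀ x a b : R, C (x * a) (x * b) → C x 0 ∨ C a b)
    (hker : ∀ a : R, C a 0 → a = 0) : RingCon F where
  r u v := ∃ p q s t : R, s ≠ 0 ∧ t ≠ 0 ∧ u = f p / f s ∧ v = f q / f t ∧ C (p * t) (q * s)
  iseqv := by
    constructor
    · intro u
      obtain ⟨r, s, hs, hu⟩ := hfrac u
      exact ⟨r, r, s, s, hs, hs, hu, hu, C.refl _⟩
    · rintro u v ⟨p, q, s, t, hs, ht, hu, hv, h⟩
      exact ⟨q, p, t, s, ht, hs, hv, hu, C.symm h⟩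
    · rintro u v w ⟨p, q, s, t, hs, ht, hu, hv, h₁⟩ ⟨p', q', s', t', hs', ht', hv', hw, h₂⟩
      refine ⟨p, q', s, t', hs, ht', hu, hw, ?_⟩
      have hft : f t ≠ 0 := fun h0 => ht (hinj (h0.trans (map_zero f).symm))
      have hfs' : f s' ≠ 0 := fun h0 => hs' (hinj (h0.trans (map_zero f).symm))
      have he : f q * f s' = f p' * f t := by
        rw [← div_eq_div_iff hft hfs']; rw [hv] at hv'; exact hv'
      have he' : q * s' = p' * t := hinj (by simpa [map_mul] using he)
      have k1 : C (p * t * (s' * t')) (q * s * (s' * t')) := C.mul h₁ (C.refl _)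
      have k2 : C (p' * t' * (s * t)) (q' * s' * (s * t)) := C.mul h₂ (C.refl _)
      have e1 : q * s * (s' * t') = p' * t' * (s * t) := by
        calc q * s * (s' * t') = (q * s') * (s * t') := by ring
        _ = (p' * t) * (s * t') := by rw [he']
        _ = p' * t' * (s * t) := by ring
      rw [e1] at k1
      have k3 : C (p * t * (s' * t')) (q' * s' * (s * t)) := C.trans k1 k2
      have e2 : p * t * (s' * t') = (t * s') * (p * t') := by ring
      have e3 : q' * s' * (s * t) = (t * s') * (q' * s) := by ring
      rw [e2, e3] at k3
      rcases hQC _ _ _ k3 with h0 | h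
      · exfalso
        have := hker _ h0
        rcases hcanc t s' 0 (by simpa using this) with h' | h'
        · exact ht h'
        · exact hs' h'
      · exact h
  add' := by
    rintro u v u' v' ⟨p, q, s, t, hs, ht, hu, hv, h₁⟩ ⟨p', q', s', t', hs', ht', hu', hv', h₂⟩
    have hfs : f s ≠ 0 := fun h0 => hs (hinj (h0.trans (map_zero f).symm))
    have hft : f t ≠ 0 := fun h0 => ht (hinj (h0.trans (map_zero f).symm))
    have hfs' : f s' ≠ 0 := fun h0 => hs' (hinj (h0.trans (map_zero f).symm))
    have hft' : f t' ≠ 0 := fun h0 => ht' (hinj (h0.trans (map_zero f).symm))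
    refine ⟨p * s' + p' * s, q * t' + q' * t, s * s', t * t',
      fun h0 => (hcanc s s' 0 (by simpa using h0)).elim hs hs',
      fun h0 => (hcanc t t' 0 (by simpa using h0)).elim ht ht', ?_, ?_, ?_⟩
    · rw [hu, hu']; field_simp; simp only [map_add, map_mul]; ring
    · rw [hv, hv']; field_simp; simp only [map_add, map_mul]; ring
    · have k := C.add (C.mul h₁ (C.refl (s' * t'))) (C.mul h₂ (C.refl (s * t)))
      have e1 : (p * s' + p' * s) * (t * t') = p * t * (s' * t') + p' * t' * (s * t) := by ring
      have e2 : (q * t' + q' * t) * (s * s') = q * s * (s' * t') + q' * s' * (s * t) := by ring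
      rw [e1, e2]; exact k
  mul' := by
    rintro u v u' v' ⟨p, q, s, t, hs, ht, hu, hv, h₁⟩ ⟨p', q', s', t', hs', ht', hu', hv', h₂⟩
    refine ⟨p * p', q * q', s * s', t * t',
      fun h0 => (hcanc s s' 0 (by simpa using h0)).elim hs hs',
      fun h0 => (hcanc t t' 0 (by simpa using h0)).elim ht ht', ?_, ?_, ?_⟩
    · rw [hu, hu']; simp [map_mul, div_mul_div_comm]
    · rw [hv, hv']; simp [map_mul, div_mul_div_comm]
    · have k := C.mul h₁ h₂
      have e1 : p * p' * (t * t') = p * t * (p' * t') := by ring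
      have e2 : q * q' * (s * s') = q * s * (q' * s') := by ring
      rw [e1, e2]; exact k

/-- A QC congruence `C` with trivial kernel is prime iff the congruence it
generates in `Frac R` is prime; a congruence of `Frac R` is prime iff its
restriction to `R` is prime. -/
theorem stmt_15 (R F : Type*) [CommSemiring R] [Semifield F]
    (hcanc : ∀ a b c : R, a * b = a * c → a = 0 ∨ b = c)
    (f : R →+* F) (hinj : Function.Injective f)
    (hfrac : ∀ x : F, ∃ r s : R, s ≠ 0 ∧ x = f r / f s)
    (C : RingCon R)
    (hQC : ∀ x a b : R, C (x * a) (x * b) → C x 0 ∨ C a b)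
    (hker : ∀ a : R, C a 0 → a = 0) :
    (IsPrimeCon C ↔
      IsPrimeCon (ringConGen
        (fun u v : F => ∃ p q : R, C p q ∧ u = f p ∧ v = f q))) ∧
    ∀ Q : RingCon F, IsPrimeCon Q ↔ IsPrimeCon (restrictCon f Q) := by
  have hfne : ∀ s : R, s ≠ 0 → f s ≠ 0 := fun s hs h0 =>
    hs (hinj (h0.trans (map_zero f).symm))
  have h10 : (1 : R) ≠ 0 := by
    intro h1
    obtain ⟨r, s, hs, _⟩ := hfrac 0
    exact hs (by calc s = s * 1 := (mul_one s).symm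
      _ = s * 0 := by rw [h1]
      _ = 0 := mul_zero s)
  set D : F → F → Prop := fun u v : F => ∃ p q : R, C p q ∧ u = f p ∧ v = f q with hD
  set E := ringConGen D with hE
  -- the extension congruence
  set Q₀ := extCon hcanc f hinj hfrac C hQC hker with hQ₀
  have hDQ₀ : ∀ u v, D u v → Q₀ u v := by
    rintro u v ⟨p, q, hpq, hu, hv⟩
    exact ⟨p, q, 1, 1, h10, h10, by simp [hu], by simp [hv], by simpa using hpq⟩
  have hEQ₀ : ∀ u v, E u v → Q₀ u v := fun u v h => RingCon.ringConGen_le.2 hDQ₀ h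
  have hQ₀C : ∀ a b : R, Q₀ (f a) (f b) → C a b := by
    rintro a b ⟨p, q, s, t, hs, ht, ha, hb, h⟩
    rw [eq_div_iff (hfne s hs)] at ha
    rw [eq_div_iff (hfne t ht)] at hb
    have hp : a * s = p := hinj (by simpa [map_mul] using ha)
    have hq : b * t = q := hinj (by simpa [map_mul] using hb)
    rw [← hp, ← hq] at h
    have e1 : a * s * t = (s * t) * a := by ring
    have e2 : b * t * s = (s * t) * b := by ring
    rw [e1, e2] at h
    rcases hQC _ _ _ h with h0 | h
    · exfalso
      rcases hcanc s t 0 (by simpa using hker _ h0) with h' | h'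
      · exact hs h'
      · exact ht h'
    · exact h
  -- restriction of E is C
  have hresE : restrictCon f E = C := by
    refine RingCon.ext fun a b => ?_
    rw [restrictCon_iff]
    constructor
    · exact fun h => hQ₀C a b (hEQ₀ _ _ h)
    · exact fun h => RingConGen.Rel.of _ _ ⟨a, b, h, rfl, rfl⟩
  have part2 : ∀ Q : RingCon F, IsPrimeCon Q ↔ IsPrimeCon (restrictCon f Q) :=
    fun Q => restrict_prime_iff f hinj hfrac Q
  refine ⟨?_, part2⟩
  rw [part2 E, hresE]
end

section
/- In a semifield, every proper congruence is determined by the equivalence class of 1: two proper congruences with the same class of 1 are equal. -/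
/-- In a proper congruence on a semifield, the class of `0` is `{0}`. -/
lemma stmt_16_aux {F : Type*} [Semifield F] (C : RingCon F)
    (hp : ∃ x y : F, ¬ C x y) {x : F} (hx : C x 0) : x = 0 := by
  by_contra hne
  obtain ⟨a, b, hab⟩ := hp
  have h1 : C 1 0 := by
    have := C.mul (C.refl x⁻¹) hx
    simpa [inv_mul_cancel₀ hne] using this
  have ha : C a 0 := by simpa using C.mul (C.refl a) h1
  have hb : C b 0 := by simpa using C.mul (C.refl b) h1
  exact hab (C.trans ha (C.symm hb))

/-- In a semifield, a proper congruence is determined by the class of `1`. -/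
theorem stmt_16 (F : Type*) [Semifield F] (C₁ C₂ : RingCon F)
    (h₁ : ∃ x y : F, ¬ C₁ x y) (h₂ : ∃ x y : F, ¬ C₂ x y)
    (h : ∀ a : F, C₁ a 1 ↔ C₂ a 1) : C₁ = C₂ := by
  have key : ∀ (C : RingCon F) (x y : F), y ≠ 0 → (C x y ↔ C (x * y⁻¹) 1) := by
    intro C x y hy
    constructor
    · intro hxy
      have := C.mul hxy (C.refl y⁻¹)
      simpa [mul_inv_cancel₀ hy] using this
    · intro hxy
      have := C.mul hxy (C.refl y)
      simpa [inv_mul_cancel_right₀ hy] using this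
  refine RingCon.ext fun x y => ?_
  rcases eq_or_ne y 0 with rfl | hy
  · constructor
    · intro hx
      have := stmt_16_aux C₁ h₁ hx
      subst this; exact C₂.refl 0
    · intro hx
      have := stmt_16_aux C₂ h₂ hx
      subst this; exact C₁.refl 0
  · rw [key C₁ x y hy, key C₂ x y hy, h]
end

section
/- Let F be an additively idempotent semifield that is a domain. Then every proper congruence of F is prime, and the congruences of F form a chain under inclusion. -/
/-- In an additively idempotent semifield that is a domain, every proper
congruence is prime and the congruences form a chain. -/
theorem stmt_17 (F : Type*) [Semifield F] (hidem : ∀ a : F, a + a = a)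
    (hdom : IsPrimeCon (diagCon F)) :
    (∀ C : RingCon F, (∃ x y : F, ¬ C x y) → IsPrimeCon C) ∧
    ∀ C D : RingCon F, C ≤ D ∨ D ≤ C := by
  have h2 : ∀ x y : F, x + (x + y) = x + y := fun x y => by rw [← add_assoc, hidem x]
  -- Total order: for any a b, a + b equals a or b.
  have tot : ∀ a b : F, a + b = a ∨ a + b = b := by
    intro a b
    have key : diagCon F ((a+b) * (a+b) + a * b) ((a+b) * b + a * (a+b)) := by
      show ((a+b) * (a+b) + a * b : F) = (a+b) * b + a * (a+b)
      simp [mul_add, add_mul, mul_comm, add_comm, add_left_comm, add_assoc, hidem, h2]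
    exact hdom.2 (a+b) a (a+b) b key
  -- improper congruences relate everything
  have himp : ∀ (E : RingCon F), E 1 0 → ∀ u v : F, E u v := by
    intro E h u v
    have hu : E u 0 := by
      have := E.mul (E.refl u) h
      rwa [mul_one, mul_zero] at this
    have hv : E v 0 := by
      have := E.mul (E.refl v) h
      rwa [mul_one, mul_zero] at this
    exact E.trans hu (E.symm hv)
  -- convexity: if E g 1 and 1 ≤ x ≤ g then E x 1
  have conv : ∀ (E : RingCon F) (g x : F), E g 1 → 1 + x = x → x + g = g → E x 1 := by
    intro E g x hg h1 hx
    have h' := E.add (E.refl x) hg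
    rw [hx, add_comm x 1, h1] at h'
    exact E.trans (E.symm h') hg
  -- 1 ≤ w + w⁻¹ for w ≠ 0
  have ge1 : ∀ w : F, w ≠ 0 → 1 + (w + w⁻¹) = w + w⁻¹ := by
    intro w hw
    rcases tot 1 w with h | h
    · have h' : (1+w) * w⁻¹ = 1 * w⁻¹ := by rw [h]
      rw [add_mul, one_mul, mul_inv_cancel₀ hw] at h'
      calc 1 + (w + w⁻¹) = w + (w⁻¹ + 1) := by ring
        _ = w + w⁻¹ := by rw [h']
    · calc 1 + (w + w⁻¹) = (1 + w) + w⁻¹ := by ring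
        _ = w + w⁻¹ := by rw [h]
  -- E w 1 → E (w + w⁻¹) 1
  have memE : ∀ (E : RingCon F) (w : F), w ≠ 0 → E w 1 → E (w + w⁻¹) 1 := by
    intro E w hw h
    have hinv : E w⁻¹ 1 := by
      have h' := E.mul (E.refl w⁻¹) h
      rw [inv_mul_cancel₀ hw, mul_one] at h'
      exact E.symm h'
    have h' := E.add h hinv
    rwa [hidem 1] at h'
  -- E (w + w⁻¹) 1 → E w 1
  have recov : ∀ (E : RingCon F) (w : F), w ≠ 0 → E (w + w⁻¹) 1 → E w 1 := by
    intro E w hw h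
    rcases tot 1 w with h1 | h1
    · have h1' : (1+w) * w⁻¹ = 1 * w⁻¹ := by rw [h1]
      rw [add_mul, one_mul, mul_inv_cancel₀ hw] at h1'
      have habs : w⁻¹ + (w + w⁻¹) = w + w⁻¹ := by
        calc w⁻¹ + (w + w⁻¹) = w + (w⁻¹ + w⁻¹) := by ring
          _ = w + w⁻¹ := by rw [hidem]
      have hinv : E w⁻¹ 1 := conv E (w + w⁻¹) w⁻¹ h (by rw [add_comm]; exact h1') habs
      have h' := E.mul (E.refl w) hinv
      rw [mul_inv_cancel₀ hw, mul_one] at h'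
      exact E.symm h'
    · have habs : w + (w + w⁻¹) = w + w⁻¹ := h2 w w⁻¹
      exact conv E (w + w⁻¹) w h h1 habs
  constructor
  · -- primeness of proper congruences
    intro C hC
    refine ⟨hC, ?_⟩
    have core : ∀ a₁ a₂ b₁ b₂ : F, a₂ + a₁ = a₁ → b₂ + b₁ = b₁ →
        C (a₁*b₁ + a₂*b₂) (a₁*b₂ + a₂*b₁) → C a₁ a₂ ∨ C b₁ b₂ := by
      intro a₁ a₂ b₁ b₂ ha hb h
      by_cases ha0 : a₁ = 0
      · left
        have ha2 : a₂ = 0 := by rw [ha0, add_zero] at ha; exact ha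
        rw [ha0, ha2]; exact C.refl 0
      by_cases hb0 : b₁ = 0
      · right
        have hb2 : b₂ = 0 := by rw [hb0, add_zero] at hb; exact hb
        rw [hb0, hb2]; exact C.refl 0
      have habs : a₁*b₁ + a₂*b₂ = a₁*b₁ := by
        calc a₁*b₁ + a₂*b₂ = (a₂+a₁)*(b₂+b₁) + a₂*b₂ := by rw [ha, hb]
          _ = a₂*b₂ + a₂*b₂ + (a₂*b₁ + a₁*b₂ + a₁*b₁) := by ring
          _ = a₂*b₂ + (a₂*b₁ + a₁*b₂ + a₁*b₁) := by rw [hidem]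
          _ = (a₂+a₁)*(b₂+b₁) := by ring
          _ = a₁*b₁ := by rw [ha, hb]
      rcases tot (a₁*b₂) (a₂*b₁) with hr | hr
      · right
        rw [habs, hr] at h
        have h' := C.mul (C.refl a₁⁻¹) h
        rwa [inv_mul_cancel_left₀ ha0, inv_mul_cancel_left₀ ha0] at h'
      · left
        rw [habs, hr] at h
        have h' := C.mul h (C.refl b₁⁻¹)
        rwa [mul_inv_cancel_right₀ hb0, mul_inv_cancel_right₀ hb0] at h'
    intro a₁ a₂ b₁ b₂ h
    rcases tot a₁ a₂ with ha | ha <;> rcases tot b₁ b₂ with hb | hb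
    · exact core a₁ a₂ b₁ b₂ (by rwa [add_comm]) (by rwa [add_comm]) h
    · have h' : C (a₁*b₂ + a₂*b₁) (a₁*b₁ + a₂*b₂) := C.symm h
      exact (core a₁ a₂ b₂ b₁ (by rwa [add_comm]) hb h').imp id fun hh => C.symm hh
    · have h' : C (a₂*b₁ + a₁*b₂) (a₂*b₂ + a₁*b₁) := by
        rw [add_comm (a₂*b₁), add_comm (a₂*b₂)]; exact C.symm h
      exact (core a₂ a₁ b₁ b₂ ha (by rwa [add_comm]) h').imp (fun hh => C.symm hh) id
    · have h' : C (a₂*b₂ + a₁*b₁) (a₂*b₁ + a₁*b₂) := by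
        rw [add_comm (a₂*b₂), add_comm (a₂*b₁)]; exact h
      exact (core a₂ a₁ b₂ b₁ ha hb h').imp (fun hh => C.symm hh) fun hh => C.symm hh
  · -- chain condition
    intro C D
    by_cases hCD : C ≤ D
    · left; exact hCD
    right
    rw [RingCon.le_def] at hCD
    push_neg at hCD
    obtain ⟨x, y, hxy, hnxy⟩ := hCD
    by_cases hx0 : x = 0
    · by_cases hy0 : y = 0
      · exact absurd (hy0 ▸ hx0 ▸ D.refl (0:F)) hnxy
      · -- C 0 y with y ≠ 0 : C is improper
        have hC01 : C 1 0 := by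
          have h' := C.mul hxy (C.refl y⁻¹)
          rw [hx0, zero_mul, mul_inv_cancel₀ hy0] at h'
          exact C.symm h'
        intro u v _
        exact himp C hC01 u v
    by_cases hy0 : y = 0
    · have hC01 : C 1 0 := by
        have h' := C.mul hxy (C.refl x⁻¹)
        rw [hy0, zero_mul, mul_inv_cancel₀ hx0] at h'
        exact h'
      intro u v _
      exact himp C hC01 u v
    -- s = x * y⁻¹ : in C-class of 1 but not in D-class of 1
    set s := x * y⁻¹ with hs
    have hs0 : s ≠ 0 := mul_ne_zero hx0 (inv_ne_zero hy0)
    have hCs : C s 1 := by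
      have h' := C.mul hxy (C.refl y⁻¹)
      rwa [mul_inv_cancel₀ hy0] at h'
    have hDs : ¬ D s 1 := by
      intro h
      have h' := D.mul h (D.refl y)
      rw [hs, inv_mul_cancel_right₀ hy0, one_mul] at h'
      exact hnxy h'
    have hCS : C (s + s⁻¹) 1 := memE C s hs0 hCs
    have hDS : ¬ D (s + s⁻¹) 1 := fun h => hDs (recov D s hs0 h)
    intro u v huv
    by_cases hu0 : u = 0
    · by_cases hv0 : v = 0
      · rw [hu0, hv0]; exact C.refl 0
      · exfalso
        have hD01 : D 1 0 := by
          have h' := D.mul huv (D.refl v⁻¹)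
          rw [hu0, zero_mul, mul_inv_cancel₀ hv0] at h'
          exact D.symm h'
        exact hnxy (himp D hD01 x y)
    by_cases hv0 : v = 0
    · exfalso
      have hD01 : D 1 0 := by
        have h' := D.mul huv (D.refl u⁻¹)
        rw [hv0, zero_mul, mul_inv_cancel₀ hu0] at h'
        exact h'
      exact hnxy (himp D hD01 x y)
    set t := u * v⁻¹ with ht
    have ht0 : t ≠ 0 := mul_ne_zero hu0 (inv_ne_zero hv0)
    have hDt : D t 1 := by
      have h' := D.mul huv (D.refl v⁻¹)
      rwa [mul_inv_cancel₀ hv0] at h'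
    have hDT : D (t + t⁻¹) 1 := memE D t ht0 hDt
    rcases tot (s + s⁻¹) (t + t⁻¹) with hST | hST
    · -- t + t⁻¹ ≤ s + s⁻¹ : convexity of C gives C (t+t⁻¹) 1, hence C t 1
      have hCT : C (t + t⁻¹) 1 :=
        conv C (s + s⁻¹) (t + t⁻¹) hCS (ge1 t ht0) (by rwa [add_comm])
      have hCt : C t 1 := recov C t ht0 hCT
      have h' := C.mul hCt (C.refl v)
      rw [ht, inv_mul_cancel_right₀ hv0, one_mul] at h'
      exact h'
    · -- s + s⁻¹ ≤ t + t⁻¹ : convexity of D gives D (s+s⁻¹) 1, contradiction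
      exact absurd (conv D (t + t⁻¹) (s + s⁻¹) hDT (ge1 s hs0) hST) hDS
end
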